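/- arXiv:1404.1182 — 7 statements merged into one kernel-verified Lean document; each statement's English description precedes it below -/
import Mathlib

section
/- There exists n₀ such that for every n ≥ n₀ and every integer δ ≥ 1 the following holds: any simple graph G on n vertices with more than C(n−1,2) + δ − 1 edges contains, as a subgraph, every simple graph H on n vertices with no isolated vertices, minimum degree δ(H) ≤ δ, and maximum degree Δ(H) ≤ √n/200 (i.e., G is universal for this class of graphs). -/
/-- `G` contains a copy of `H`, i.e. a subgraph isomorphic to `H`: there is an
injection of the vertices of `H` into the vertices of `G` mapping edges to edges. -/
def ContainsCopy {α β : Type*} (G : SimpleGraph α) (H : SimpleGraph β) : Prop :=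
  ∃ f : β → α, Function.Injective f ∧ ∀ u v : β, H.Adj u v → G.Adj (f u) (f v)


open Finset SimpleGraph

section Prelim

variable {α β : Type*}

/-- injection from one finset into another given card inequality -/
lemma exists_injOn_of_card_le [DecidableEq α] [Nonempty β] (s : Finset α) (t : Finset β)
    (h : s.card ≤ t.card) : ∃ φ : α → β, Set.InjOn φ ↑s ∧ ∀ a ∈ s, φ a ∈ t := by
  obtain ⟨t', ht', hcard⟩ := Finset.exists_subset_card_eq h
  classical
  refine ⟨fun a => if ha : a ∈ s then (t'.equivFin.symm (Fin.cast hcard.symm (s.equivFin ⟨a, ha⟩))).1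
    else Classical.arbitrary β, ?_, ?_⟩
  · intro a ha b hb hab
    simp only [Finset.mem_coe] at ha hb
    simp only [dif_pos ha, dif_pos hb] at hab
    have := Subtype.coe_injective hab
    have := t'.equivFin.symm.injective this
    have h2 : (Fin.cast hcard.symm) (s.equivFin ⟨a, ha⟩) = (Fin.cast hcard.symm) (s.equivFin ⟨b, hb⟩) := this
    have h3 := (Fin.cast_injective _) h2
    have h4 := s.equivFin.injective h3
    exact congrArg Subtype.val h4
  · intro a ha
    simp only [dif_pos ha]
    exact ht' (t'.equivFin.symm _).2

lemma sym2_filter_mem_card_le_two [DecidableEq α] (e : Sym2 α) (s : Finset α) :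
    (s.filter (· ∈ e)).card ≤ 2 := by
  induction e using Sym2.ind with
  | _ a b =>
    classical
    have hsub : s.filter (· ∈ s(a,b)) ⊆ insert a {b} := by
      intro x hx
      simp only [Finset.mem_filter, Sym2.mem_iff] at hx
      simp only [Finset.mem_insert, Finset.mem_singleton]
      exact hx.2
    exact le_trans (Finset.card_le_card hsub) (le_trans (Finset.card_insert_le a {b}) (by simp))

end Prelim

section GraphPrelim

variable {n : ℕ} (M : SimpleGraph (Fin n)) [DecidableRel M.Adj]

lemma my_incidence_subset_edgeFinset (v : Fin n) : M.incidenceFinset v ⊆ M.edgeFinset := by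
  intro e he
  rw [mem_incidenceFinset] at he
  exact mem_edgeFinset.2 he.1

lemma my_degree_le_card_edges (v : Fin n) : M.degree v ≤ M.edgeFinset.card := by
  rw [← card_incidenceFinset_eq_degree]
  exact Finset.card_le_card (my_incidence_subset_edgeFinset M v)

lemma my_sum_degree_le (A : Finset (Fin n)) (R : Finset (Sym2 (Fin n)))
    (h : ∀ y ∈ A, M.incidenceFinset y ⊆ R) :
    ∑ y ∈ A, M.degree y ≤ 2 * R.card := by
  classical
  have h1 : ∀ y ∈ A, M.degree y = (R.filter (fun e => e ∈ M.incidenceFinset y)).card := by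
    intro y hy
    rw [← card_incidenceFinset_eq_degree]
    congr 1
    ext e
    simp only [Finset.mem_filter]
    exact ⟨fun he => ⟨h y hy he, he⟩, fun he => he.2⟩
  calc ∑ y ∈ A, M.degree y = ∑ y ∈ A, (R.filter (fun e => e ∈ M.incidenceFinset y)).card :=
        Finset.sum_congr rfl h1
    _ = ∑ y ∈ A, ∑ e ∈ R, (if e ∈ M.incidenceFinset y then 1 else 0) := by
        refine Finset.sum_congr rfl (fun y _ => ?_)
        rw [Finset.card_filter]
    _ = ∑ e ∈ R, ∑ y ∈ A, (if e ∈ M.incidenceFinset y then 1 else 0) := Finset.sum_comm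
    _ = ∑ e ∈ R, (A.filter (fun y => e ∈ M.incidenceFinset y)).card := by
        refine Finset.sum_congr rfl (fun e _ => ?_)
        rw [Finset.card_filter]
    _ ≤ ∑ e ∈ R, 2 := by
        refine Finset.sum_le_sum (fun e _ => ?_)
        refine le_trans (Finset.card_le_card (fun y hy => ?_)) (sym2_filter_mem_card_le_two e A)
        simp only [Finset.mem_filter, mem_incidenceFinset, SimpleGraph.incidenceSet] at hy ⊢
        exact ⟨hy.1, hy.2.2⟩
    _ = 2 * R.card := by rw [Finset.sum_const, smul_eq_mul, mul_comm]

lemma my_pair_degree (x y : Fin n) (hxy : x ≠ y) :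
    M.degree x + M.degree y ≤ M.edgeFinset.card + 1 := by
  classical
  have hsub : M.incidenceFinset x ∩ M.incidenceFinset y ⊆ {s(x,y)} := by
    intro e he
    simp only [Finset.mem_inter, mem_incidenceFinset, SimpleGraph.incidenceSet,
      Set.mem_setOf_eq] at he
    obtain ⟨⟨_, hx⟩, ⟨_, hy⟩⟩ := he
    simp only [Finset.mem_singleton]
    exact ((Sym2.mem_and_mem_iff hxy).1 ⟨hx, hy⟩)
  have hunion : M.incidenceFinset x ∪ M.incidenceFinset y ⊆ M.edgeFinset :=
    Finset.union_subset (my_incidence_subset_edgeFinset M x) (my_incidence_subset_edgeFinset M y)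
  have := Finset.card_union_add_card_inter (M.incidenceFinset x) (M.incidenceFinset y)
  have h1 : (M.incidenceFinset x ∪ M.incidenceFinset y).card ≤ M.edgeFinset.card :=
    Finset.card_le_card hunion
  have h2 : (M.incidenceFinset x ∩ M.incidenceFinset y).card ≤ 1 := by
    refine le_trans (Finset.card_le_card hsub) (by simp)
  rw [← card_incidenceFinset_eq_degree, ← card_incidenceFinset_eq_degree]
  omega

end GraphPrelim


open Finset SimpleGraph

section Centers

variable {n D : ℕ} (M H : SimpleGraph (Fin n)) [DecidableRel M.Adj] [DecidableRel H.Adj]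

lemma my_div_trick {a b c n : ℕ} (h : a * (n+1) ≤ c * b * n) : a ≤ c * b := by
  by_contra hcon
  push_neg at hcon
  have h1 : (c * b + 1) * (n + 1) ≤ a * (n+1) := Nat.mul_le_mul_right _ hcon
  have h2 : c * b * n < (c * b + 1) * (n + 1) := by nlinarith
  omega

lemma centers_lemma (hD : 1 ≤ D) (hDn : 40000 * D^2 ≤ n)
    (hdegH : ∀ v, H.degree v ≤ D)
    (F : Finset (Fin n)) (hF : F.card ≤ 2 * D^2 + 2*D + 2)
    (Q : Finset (Fin n))
    (hQmass : ∀ x ∈ Q, 20 * M.degree x ≤ 15 * n)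
    (hQheavy : ∀ x ∈ Q, n < 32 * D * M.degree x)
    (hQsum : ∑ x ∈ Q, M.degree x ≤ 2 * n) :
    ∃ ψ : Fin n → Fin n,
      Set.InjOn ψ ↑Q ∧
      (∀ x ∈ Q, ψ x ∉ F) ∧
      (∀ x ∈ Q, ∀ y ∈ Q, x ≠ y → ¬ H.Adj (ψ x) (ψ y)) ∧
      (∀ w : Fin n, 20 * ∑ x ∈ Q.filter (fun x => H.Adj (ψ x) w), M.degree x ≤ 16 * n) := by
  classical
  revert hQmass hQheavy hQsum
  induction Q using Finset.induction_on with
  | empty =>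
    intro _ _ _
    exact ⟨id, by simp [Set.InjOn], by simp, by simp, by intro w; simp⟩
  | @insert x Q hxQ ih =>
    intro hQmass hQheavy hQsum
    have hsub : Q ⊆ insert x Q := Finset.subset_insert x Q
    have hm' : ∀ y ∈ Q, 20 * M.degree y ≤ 15 * n := fun y hy => hQmass y (hsub hy)
    have hh' : ∀ y ∈ Q, n < 32 * D * M.degree y := fun y hy => hQheavy y (hsub hy)
    have hs' : ∑ y ∈ Q, M.degree y ≤ 2 * n := by
      rw [Finset.sum_insert hxQ] at hQsum
      omega
    obtain ⟨ψ, hinj, hF', hindep, hcap⟩ := ih hm' hh' hs'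
    -- count of Q
    have hQcard : Q.card ≤ 64 * D := by
      have h1 : Q.card * (n+1) ≤ 32 * D * ∑ y ∈ Q, M.degree y := by
        calc Q.card * (n+1) = ∑ _y ∈ Q, (n+1) := by rw [Finset.sum_const, smul_eq_mul]
          _ ≤ ∑ y ∈ Q, 32 * D * M.degree y := Finset.sum_le_sum (fun y hy => hh' y hy)
          _ = 32 * D * ∑ y ∈ Q, M.degree y := by rw [Finset.mul_sum]
      have h2 : 32 * D * ∑ y ∈ Q, M.degree y ≤ 64 * D * n := by
        calc 32 * D * ∑ y ∈ Q, M.degree y ≤ 32 * D * (2 * n) :=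
              Nat.mul_le_mul_left _ hs'
          _ = 64 * D * n := by ring
      exact my_div_trick (le_trans h1 h2)
    -- saturated vertices
    set load : Fin n → ℕ := fun w => ∑ y ∈ Q.filter (fun y => H.Adj (ψ y) w), M.degree y
      with hloaddef
    have hloadsum : ∑ w : Fin n, load w ≤ 2 * n * D := by
      have h1 : ∀ w : Fin n, load w = ∑ y ∈ Q, if H.Adj (ψ y) w then M.degree y else 0 := by
        intro w
        exact Finset.sum_filter _ _
      calc ∑ w : Fin n, load w = ∑ w : Fin n, ∑ y ∈ Q, if H.Adj (ψ y) w then M.degree y else 0 :=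
            Finset.sum_congr rfl (fun w _ => h1 w)
        _ = ∑ y ∈ Q, ∑ w : Fin n, if H.Adj (ψ y) w then M.degree y else 0 := Finset.sum_comm
        _ = ∑ y ∈ Q, M.degree y * H.degree (ψ y) := by
            refine Finset.sum_congr rfl (fun y _ => ?_)
            rw [← Finset.sum_filter, Finset.sum_const, smul_eq_mul, mul_comm]
            congr 1
            rw [← card_neighborFinset_eq_degree, neighborFinset_eq_filter]
        _ ≤ ∑ y ∈ Q, M.degree y * D := Finset.sum_le_sum (fun y _ =>
            Nat.mul_le_mul_left _ (hdegH _))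
        _ = (∑ y ∈ Q, M.degree y) * D := by rw [Finset.sum_mul]
        _ ≤ (2*n) * D := Nat.mul_le_mul_right _ hs'
        _ = 2 * n * D := by ring
    set sat : Finset (Fin n) := Finset.univ.filter (fun w => n < 20 * load w) with hsatdef
    have hsatcard : sat.card ≤ 40 * D := by
      have h1 : sat.card * (n+1) ≤ ∑ w ∈ sat, 20 * load w := by
        calc sat.card * (n+1) = ∑ _w ∈ sat, (n+1) := by rw [Finset.sum_const, smul_eq_mul]
          _ ≤ ∑ w ∈ sat, 20 * load w := Finset.sum_le_sum (fun w hw => by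
              have := (Finset.mem_filter.1 hw).2
              omega)
      have h2 : ∑ w ∈ sat, 20 * load w ≤ 40 * D * n := by
        calc ∑ w ∈ sat, 20 * load w = 20 * ∑ w ∈ sat, load w := by rw [Finset.mul_sum]
          _ ≤ 20 * ∑ w : Fin n, load w := by
              refine Nat.mul_le_mul_left _ ?_
              exact Finset.sum_le_sum_of_subset (Finset.subset_univ sat)
          _ ≤ 20 * (2 * n * D) := Nat.mul_le_mul_left _ hloadsum
          _ = 40 * D * n := by ring
      exact my_div_trick (le_trans h1 h2)
    -- bad set for the new center
    set BadC : Finset (Fin n) := F ∪ (Q.image ψ ∪ ((Q.image ψ).biUnion (fun c => H.neighborFinset c)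
      ∪ sat.biUnion (fun w => H.neighborFinset w))) with hBadCdef
    have hBadCcard : BadC.card < n := by
      have h1 : (Q.image ψ).card ≤ 64 * D := le_trans Finset.card_image_le hQcard
      have h2 : ((Q.image ψ).biUnion (fun c => H.neighborFinset c)).card ≤ 64 * D * D := by
        refine le_trans Finset.card_biUnion_le ?_
        have hb : ∀ c ∈ Q.image ψ, (H.neighborFinset c).card ≤ D := by
          intro c _
          rw [card_neighborFinset_eq_degree]; exact hdegH c
        calc ∑ c ∈ Q.image ψ, (H.neighborFinset c).card ≤ ∑ _c ∈ Q.image ψ, D :=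
              Finset.sum_le_sum hb
          _ = (Q.image ψ).card * D := by rw [Finset.sum_const, smul_eq_mul]
          _ ≤ 64 * D * D := Nat.mul_le_mul_right _ h1
      have h3 : (sat.biUnion (fun w => H.neighborFinset w)).card ≤ 40 * D * D := by
        refine le_trans Finset.card_biUnion_le ?_
        have hb : ∀ c ∈ sat, (H.neighborFinset c).card ≤ D := by
          intro c _
          rw [card_neighborFinset_eq_degree]; exact hdegH c
        calc ∑ c ∈ sat, (H.neighborFinset c).card ≤ ∑ _c ∈ sat, D := Finset.sum_le_sum hb
          _ = sat.card * D := by rw [Finset.sum_const, smul_eq_mul]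
          _ ≤ 40 * D * D := Nat.mul_le_mul_right _ hsatcard
      have htot : BadC.card ≤ F.card + ((Q.image ψ).card
          + (((Q.image ψ).biUnion (fun c => H.neighborFinset c)).card
          + (sat.biUnion (fun w => H.neighborFinset w)).card)) := by
        refine le_trans (Finset.card_union_le _ _) ?_
        refine Nat.add_le_add_left ?_ _
        refine le_trans (Finset.card_union_le _ _) ?_
        exact Nat.add_le_add_left (Finset.card_union_le _ _) _
      have hDD : D ≤ D^2 := by nlinarith
      have hsq : 64 * D * D = 64 * D^2 := by ring
      have hsq2 : 40 * D * D = 40 * D^2 := by ring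
      rw [hsq] at h2
      rw [hsq2] at h3
      omega
    obtain ⟨c, hc⟩ : ∃ c, c ∉ BadC := by
      by_contra hcon
      push_neg at hcon
      have : BadC = Finset.univ := Finset.eq_univ_iff_forall.2 hcon
      rw [this, Finset.card_univ, Fintype.card_fin] at hBadCcard
      omega
    have hcF : c ∉ F := fun h => hc (Finset.mem_union_left _ h)
    have hcim : c ∉ Q.image ψ := fun h => hc (Finset.mem_union_right _ (Finset.mem_union_left _ h))
    have hcnbr : ∀ y ∈ Q, ¬ H.Adj (ψ y) c := by
      intro y hy hadj
      refine hc (Finset.mem_union_right _ (Finset.mem_union_right _ (Finset.mem_union_left _ ?_)))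
      exact Finset.mem_biUnion.2 ⟨ψ y, Finset.mem_image_of_mem ψ hy, (mem_neighborFinset _ _ _).2 hadj⟩
    have hcsat : ∀ w, H.Adj c w → 20 * load w ≤ n := by
      intro w hadj
      by_contra hcon
      push_neg at hcon
      refine hc (Finset.mem_union_right _ (Finset.mem_union_right _ (Finset.mem_union_right _ ?_)))
      refine Finset.mem_biUnion.2 ⟨w, ?_, (mem_neighborFinset _ _ _).2 hadj.symm⟩
      rw [hsatdef]
      exact Finset.mem_filter.2 ⟨Finset.mem_univ w, hcon⟩
    -- update
    set ψ' : Fin n → Fin n := Function.update ψ x c with hψ'def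
    have hψ'Q : ∀ y ∈ Q, ψ' y = ψ y := by
      intro y hy
      rw [hψ'def]
      exact Function.update_of_ne (ne_of_mem_of_not_mem hy hxQ) c ψ
    have hψ'x : ψ' x = c := Function.update_self x c ψ
    refine ⟨ψ', ?_, ?_, ?_, ?_⟩
    · intro a ha b hb hab
      simp only [Finset.coe_insert, Set.mem_insert_iff, Finset.mem_coe] at ha hb
      rcases ha with ha | ha <;> rcases hb with hb | hb
      · rw [ha, hb]
      · exfalso
        rw [ha, hψ'x, hψ'Q b hb] at hab
        exact hcim (by rw [hab]; exact Finset.mem_image_of_mem ψ hb)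
      · exfalso
        rw [hb, hψ'x, hψ'Q a ha] at hab
        exact hcim (by rw [← hab]; exact Finset.mem_image_of_mem ψ ha)
      · rw [hψ'Q a ha, hψ'Q b hb] at hab
        exact hinj (Finset.mem_coe.2 ha) (Finset.mem_coe.2 hb) hab
    · intro y hy
      rcases Finset.mem_insert.1 hy with h | h
      · rw [h, hψ'x]; exact hcF
      · rw [hψ'Q y h]; exact hF' y h
    · intro a ha b hb hab
      rcases Finset.mem_insert.1 ha with ha' | ha' <;> rcases Finset.mem_insert.1 hb with hb' | hb'
      · exact absurd (ha' ▸ hb' ▸ rfl : a = b) hab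
      · rw [ha', hψ'x, hψ'Q b hb']
        intro hadj
        exact hcnbr b hb' hadj.symm
      · rw [hb', hψ'x, hψ'Q a ha']
        intro hadj
        exact hcnbr a ha' hadj
      · rw [hψ'Q a ha', hψ'Q b hb']
        exact hindep a ha' b hb' hab
    · intro w
      have hQfilt : Q.filter (fun y => H.Adj (ψ' y) w) = Q.filter (fun y => H.Adj (ψ y) w) :=
        Finset.filter_congr (fun y hy => by rw [hψ'Q y hy])
      have hfilt : (insert x Q).filter (fun y => H.Adj (ψ' y) w)
          = if H.Adj c w then insert x (Q.filter (fun y => H.Adj (ψ y) w))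
            else Q.filter (fun y => H.Adj (ψ y) w) := by
        rw [Finset.filter_insert, hQfilt, hψ'x]
      rw [hfilt]
      by_cases hadj : H.Adj c w
      · rw [if_pos hadj, Finset.sum_insert (fun h => hxQ (Finset.mem_of_mem_filter x h))]
        have h1 : 20 * ∑ y ∈ Q.filter (fun y => H.Adj (ψ y) w), M.degree y ≤ n := hcsat w hadj
        have h2 := hQmass x (Finset.mem_insert_self x Q)
        omega
      · rw [if_neg hadj]
        exact hcap w

end Centers


open Finset SimpleGraph

section Super

variable {n D : ℕ} (M H : SimpleGraph (Fin n)) [DecidableRel M.Adj] [DecidableRel H.Adj]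

lemma super_lemma (hD : 1 ≤ D) (hDn : 40000 * D^2 ≤ n)
    (hdegH : ∀ v, H.degree v ≤ D)
    (xstar ustar : Fin n) (δ : ℕ)
    (hust : H.degree ustar ≤ δ)
    (heM : M.edgeFinset.card + δ ≤ n - 1) (hn1 : 1 ≤ n) :
    ∃ φ : Fin n → Fin n,
      Set.InjOn φ ↑(H.neighborFinset ustar) ∧
      (∀ w ∈ H.neighborFinset ustar, ¬ M.Adj xstar (φ w) ∧ φ w ≠ xstar) ∧
      (∀ w ∈ H.neighborFinset ustar, 32 * D * M.degree (φ w) ≤ n) ∧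
      (∀ w ∈ H.neighborFinset ustar, ∀ w' ∈ H.neighborFinset ustar,
        φ w ≠ φ w' → ¬ M.Adj (φ w) (φ w')) := by
  classical
  set m := M.degree xstar with hmdef
  set NG : Finset (Fin n) := (insert xstar (M.neighborFinset xstar))ᶜ with hNGdef
  have hNGmem : ∀ y, y ∈ NG ↔ (y ≠ xstar ∧ ¬ M.Adj xstar y) := by
    intro y
    rw [hNGdef, Finset.mem_compl, Finset.mem_insert, mem_neighborFinset]
    tauto
  have hNGcard : NG.card + (m + 1) = n := by
    have h1 : (insert xstar (M.neighborFinset xstar)).card = m + 1 := by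
      rw [Finset.card_insert_of_notMem (fun h => M.irrefl ((mem_neighborFinset _ _ _).1 h))]
      rw [card_neighborFinset_eq_degree]
    have h2 := Finset.card_compl (insert xstar (M.neighborFinset xstar)) (α := Fin n)
    have h3 : (insert xstar (M.neighborFinset xstar)).card ≤ n := by
      have := Finset.card_le_univ (insert xstar (M.neighborFinset xstar))
      simpa using this
    rw [Fintype.card_fin, h1] at h2
    rw [hNGdef, h2]
    omega
  set R : Finset (Sym2 (Fin n)) := M.edgeFinset.filter (fun e => ¬ xstar ∈ e) with hRdef
  have hRcard : R.card + m = M.edgeFinset.card := by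
    have h1 := Finset.card_filter_add_card_filter_not (s := M.edgeFinset)
      (fun e => xstar ∈ e)
    have h2 : M.edgeFinset.filter (fun e => xstar ∈ e) = M.incidenceFinset xstar := by
      ext e
      rw [Finset.mem_filter, mem_incidenceFinset]
      constructor
      · rintro ⟨h3, h4⟩
        exact ⟨mem_edgeFinset.1 h3, h4⟩
      · rintro ⟨h3, h4⟩
        exact ⟨mem_edgeFinset.2 h3, h4⟩
    rw [h2, card_incidenceFinset_eq_degree] at h1
    rw [hRdef]
    omega
  -- incidence of NG-vertices avoids xstar
  have hincR : ∀ y ∈ NG, M.incidenceFinset y ⊆ R := by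
    intro y hy e he
    rw [mem_incidenceFinset] at he
    obtain ⟨he1, he2⟩ := he
    rw [hRdef, Finset.mem_filter]
    refine ⟨mem_edgeFinset.2 he1, ?_⟩
    intro hxe
    obtain ⟨hyx, hyadj⟩ := (hNGmem y).1 hy
    have : e = s(xstar, y) := (Sym2.mem_and_mem_iff (fun h => hyx h.symm)).1 ⟨hxe, he2⟩
    rw [this] at he1
    exact hyadj ((M.mem_edgeSet).1 he1)
  set hs : Finset (Fin n) := NG.filter (fun y => n < 32 * D * M.degree y) with hhsdef
  set lightIn : Finset (Fin n) := NG.filter (fun y => ¬ n < 32 * D * M.degree y) with hlightdef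
  set E' : Finset (Sym2 (Fin n)) := R.filter (fun e => ∀ a ∈ e, a ∈ lightIn) with hE'def
  set Rout : Finset (Sym2 (Fin n)) := R.filter (fun e => ∃ a ∈ e, a ∈ hs) with hRoutdef
  have hhsRout : ∀ y ∈ hs, M.incidenceFinset y ⊆ Rout := by
    intro y hy e he
    rw [hRoutdef, Finset.mem_filter]
    have hyNG : y ∈ NG := Finset.mem_of_mem_filter y hy
    refine ⟨hincR y hyNG he, ⟨y, ?_, hy⟩⟩
    rw [mem_incidenceFinset] at he
    exact he.2
  have hhscard : hs.card ≤ Rout.card := by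
    have h1 : hs.card * (n+1) ≤ ∑ y ∈ hs, 32 * D * M.degree y := by
      calc hs.card * (n+1) = ∑ _y ∈ hs, (n+1) := by rw [Finset.sum_const, smul_eq_mul]
        _ ≤ ∑ y ∈ hs, 32 * D * M.degree y := Finset.sum_le_sum (fun y hy =>
            (Finset.mem_filter.1 hy).2)
    have h2 : ∑ y ∈ hs, 32 * D * M.degree y = 32 * D * ∑ y ∈ hs, M.degree y := by
      rw [Finset.mul_sum]
    have h3 : ∑ y ∈ hs, M.degree y ≤ 2 * Rout.card := my_sum_degree_le M hs Rout hhsRout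
    have h4 : hs.card * (n+1) ≤ 64 * D * Rout.card := by
      calc hs.card * (n+1) ≤ 32 * D * ∑ y ∈ hs, M.degree y := by rw [← h2]; exact h1
        _ ≤ 32 * D * (2 * Rout.card) := Nat.mul_le_mul_left _ h3
        _ = 64 * D * Rout.card := by ring
    have h5 : 64 * D ≤ n + 1 := by nlinarith
    have h6 : 64 * D * Rout.card ≤ (n+1) * Rout.card := Nat.mul_le_mul_right _ h5
    have h7 : hs.card * (n+1) ≤ (n+1) * Rout.card := le_trans h4 h6
    rw [mul_comm] at h7
    exact Nat.le_of_mul_le_mul_left h7 (by omega)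
  have hdisj : E'.card + Rout.card ≤ R.card := by
    have hd : Disjoint E' Rout := by
      rw [Finset.disjoint_left]
      intro e he1 he2
      obtain ⟨_, hlight⟩ := Finset.mem_filter.1 he1
      obtain ⟨_, y, hy1, hy2⟩ := Finset.mem_filter.1 he2
      have := hlight y hy1
      rw [hlightdef, Finset.mem_filter] at this
      rw [hhsdef, Finset.mem_filter] at hy2
      exact this.2 hy2.2
    rw [← Finset.card_union_of_disjoint hd]
    refine Finset.card_le_card ?_
    refine Finset.union_subset (Finset.filter_subset _ _) (Finset.filter_subset _ _)
  set S' : Finset (Fin n) := lightIn \ E'.image (fun e => (Quot.out e).1) with hS'def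
  have hS'card : δ ≤ S'.card := by
    have h1 : lightIn.card ≤ S'.card + E'.card := by
      rw [hS'def]
      calc lightIn.card
          ≤ (lightIn \ E'.image (fun e => (Quot.out e).1)).card
            + (E'.image (fun e => (Quot.out e).1)).card :=
            Finset.card_le_card_sdiff_add_card
        _ ≤ (lightIn \ E'.image (fun e => (Quot.out e).1)).card + E'.card :=
            Nat.add_le_add_left Finset.card_image_le _
    have h2 : hs.card + lightIn.card = NG.card := by
      rw [hhsdef, hlightdef]
      exact Finset.card_filter_add_card_filter_not _
    -- NG.card ≥ δ + R.card
    have h3 : δ + R.card ≤ NG.card := by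
      have hm_le : m ≤ M.edgeFinset.card := by
        rw [hmdef, ← card_incidenceFinset_eq_degree]
        exact Finset.card_le_card (my_incidence_subset_edgeFinset M xstar)
      omega
    omega
  have hdeg_le : (H.neighborFinset ustar).card ≤ S'.card := by
    rw [card_neighborFinset_eq_degree]
    omega
  haveI : Nonempty (Fin n) := ⟨⟨0, by omega⟩⟩
  obtain ⟨φ, hφinj, hφmem⟩ := exists_injOn_of_card_le (H.neighborFinset ustar) S' hdeg_le
  have hS'sub : ∀ y ∈ S', y ∈ NG ∧ 32 * D * M.degree y ≤ n := by
    intro y hy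
    rw [hS'def, Finset.mem_sdiff] at hy
    obtain ⟨hy1, _⟩ := hy
    rw [hlightdef, Finset.mem_filter] at hy1
    exact ⟨hy1.1, by omega⟩
  refine ⟨φ, hφinj, ?_, ?_, ?_⟩
  · intro w hw
    obtain ⟨h1, _⟩ := hS'sub (φ w) (hφmem w hw)
    obtain ⟨h2, h3⟩ := (hNGmem (φ w)).1 h1
    exact ⟨h3, h2⟩
  · intro w hw
    exact (hS'sub (φ w) (hφmem w hw)).2
  · intro w hw w' hw' hne hadj
    have hm1 := hφmem w hw
    have hm2 := hφmem w' hw'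
    -- the edge between them would be in E', whose chosen endpoint is removed from S'
    set e := s(φ w, φ w') with hedef
    have heR : e ∈ R := by
      rw [hRdef, Finset.mem_filter]
      refine ⟨mem_edgeFinset.2 ((M.mem_edgeSet).2 hadj), ?_⟩
      intro hxe
      rw [hedef, Sym2.mem_iff] at hxe
      rcases hxe with h | h
      · exact ((hNGmem (φ w)).1 (hS'sub _ hm1).1).1 h.symm
      · exact ((hNGmem (φ w')).1 (hS'sub _ hm2).1).1 h.symm
    have heE' : e ∈ E' := by
      rw [hE'def, Finset.mem_filter]
      refine ⟨heR, ?_⟩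
      intro a ha
      rw [hedef, Sym2.mem_iff] at ha
      have hsub1 : φ w ∈ lightIn := (Finset.mem_sdiff.1 (by rw [hS'def] at hm1; exact hm1)).1
      have hsub2 : φ w' ∈ lightIn := (Finset.mem_sdiff.1 (by rw [hS'def] at hm2; exact hm2)).1
      rcases ha with h | h
      · rw [h]; exact hsub1
      · rw [h]; exact hsub2
    have hout : (Quot.out e).1 ∈ E'.image (fun e => (Quot.out e).1) :=
      Finset.mem_image_of_mem _ heE'
    have houtmem : (Quot.out e).1 ∈ e := Sym2.out_fst_mem e
    rw [hedef, Sym2.mem_iff] at houtmem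
    rcases houtmem with h | h
    · have := (Finset.mem_sdiff.1 (by rw [hS'def] at hm1; exact hm1)).2
      rw [h] at hout
      exact this hout
    · have := (Finset.mem_sdiff.1 (by rw [hS'def] at hm2; exact hm2)).2
      rw [h] at hout
      exact this hout

end Super


open Finset SimpleGraph

section Phase2

variable {n D : ℕ} (M H : SimpleGraph (Fin n)) [DecidableRel M.Adj] [DecidableRel H.Adj]

lemma phase2 (hn : 100000000 ≤ n) (hD : 1 ≤ D)
    (hdegH : ∀ v, H.degree v ≤ D)
    (S : Finset (Fin n)) (σ : Fin n → Fin n)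
    (K1 : Set.InjOn σ ↑S)
    (K2 : ∀ x : Fin n, n < 32 * D * M.degree x → x ∈ S.image σ)
    (K3 : ∀ a ∈ S, ∀ b ∈ S, H.Adj a b → ¬ M.Adj (σ a) (σ b))
    (K4 : ∀ v, v ∉ S → 160 * ∑ u ∈ (H.neighborFinset v ∩ S), M.degree (σ u) ≤ 133 * n)
    (K5 : 160 * S.card ≤ n) :
    ∃ f : Equiv.Perm (Fin n), ∀ u v, H.Adj u v → ¬ M.Adj (f u) (f v) := by
  classical
  -- existence of a permutation extending σ
  have hextend : ∃ f : Equiv.Perm (Fin n), ∀ a ∈ S, f a = σ a := by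
    have hcard_im : (S.image σ).card = S.card := Finset.card_image_of_injOn K1
    let g₁ : {x // x ∈ S} ≃ {y // y ∈ S.image σ} := by
      refine Equiv.ofBijective (fun x => ⟨σ x.1, Finset.mem_image_of_mem σ x.2⟩) ⟨?_, ?_⟩
      · intro x y hxy
        exact Subtype.ext (K1 (Finset.mem_coe.2 x.2) (Finset.mem_coe.2 y.2)
          (congrArg Subtype.val hxy))
      · intro y
        obtain ⟨a, ha, hae⟩ := Finset.mem_image.1 y.2
        exact ⟨⟨a, ha⟩, Subtype.ext hae⟩
    have hc : Fintype.card {x : Fin n // ¬ x ∈ S} = Fintype.card {y : Fin n // ¬ y ∈ S.image σ} := by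
      rw [Fintype.card_subtype_compl, Fintype.card_subtype_compl]
      congr 1
      rw [Fintype.card_coe, Fintype.card_coe, hcard_im]
    have g₂ : {x : Fin n // ¬ x ∈ S} ≃ {y : Fin n // ¬ y ∈ S.image σ} := Fintype.equivOfCardEq hc
    refine ⟨((Equiv.sumCompl (· ∈ S)).symm.trans ((g₁.sumCongr g₂).trans
      (Equiv.sumCompl (· ∈ S.image σ)))), ?_⟩
    intro a ha
    simp only [Equiv.trans_apply]
    rw [Equiv.sumCompl_symm_apply_of_pos (p := (· ∈ S)) ha]
    simp only [Equiv.sumCongr_apply, Sum.map_inl, Equiv.sumCompl_apply_inl]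
    rfl
  obtain ⟨f₀, hf₀⟩ := hextend
  -- conflicts
  set Cf : Equiv.Perm (Fin n) → Finset (Sym2 (Fin n)) :=
    fun f => H.edgeFinset.filter (fun e => Sym2.map (⇑f) e ∈ M.edgeFinset) with hCfdef
  have hdone : ∀ f : Equiv.Perm (Fin n), (Cf f).card = 0 →
      (∀ u v, H.Adj u v → ¬ M.Adj (f u) (f v)) := by
    intro f hc u v huv hM
    have h1 : s(u,v) ∈ Cf f := by
      rw [hCfdef]
      refine Finset.mem_filter.2 ⟨mem_edgeFinset.2 ((H.mem_edgeSet).2 huv), ?_⟩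
      rw [Sym2.map_pair_eq, mem_edgeFinset, mem_edgeSet]
      exact hM
    rw [Finset.card_eq_zero.1 hc] at h1
    exact absurd h1 (Finset.notMem_empty _)
  suffices hmain : ∀ k (f : Equiv.Perm (Fin n)), (∀ a ∈ S, f a = σ a) → (Cf f).card ≤ k →
      ∃ g : Equiv.Perm (Fin n), ∀ u v, H.Adj u v → ¬ M.Adj (g u) (g v) by
    exact hmain (Cf f₀).card f₀ hf₀ le_rfl
  intro k
  induction k with
  | zero =>
    intro f hf hc
    exact ⟨f, hdone f (Nat.le_zero.1 hc)⟩
  | succ k ih =>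
    intro f hf hc
    rcases Nat.eq_zero_or_pos (Cf f).card with h0 | hpos
    · exact ⟨f, hdone f h0⟩
    -- pick a conflict with a movable endpoint
    obtain ⟨u, v, huv, hMuv, hvS⟩ : ∃ u v, H.Adj u v ∧ M.Adj (f u) (f v) ∧ v ∉ S := by
      obtain ⟨e₀, he₀⟩ := Finset.card_pos.1 hpos
      revert he₀
      induction e₀ using Sym2.ind with
      | _ a b =>
        intro he₀
        rw [hCfdef] at he₀
        obtain ⟨h1, h2⟩ := Finset.mem_filter.1 he₀
        rw [mem_edgeFinset, mem_edgeSet] at h1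
        rw [Sym2.map_pair_eq, mem_edgeFinset, mem_edgeSet] at h2
        by_cases hbS : b ∈ S
        · by_cases haS : a ∈ S
          · rw [hf a haS, hf b hbS] at h2
            exact absurd h2 (K3 a haS b hbS h1)
          · exact ⟨b, a, h1.symm, h2.symm, haS⟩
        · exact ⟨a, b, h1, h2, hbS⟩
    -- the current position of v is light
    have hxlight : 32 * D * M.degree (f v) ≤ n := by
      by_contra hcon
      push_neg at hcon
      obtain ⟨a, haS, hae⟩ := Finset.mem_image.1 (K2 (f v) hcon)
      rw [← hf a haS] at hae
      exact hvS ((f.injective hae) ▸ haS)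
    -- bad set
    set B1 : Finset (Fin n) := S.image σ with hB1def
    set B2 : Finset (Fin n) := (H.neighborFinset v).biUnion (fun v' => M.neighborFinset (f v'))
      with hB2def
    set B3 : Finset (Fin n) := (M.neighborFinset (f v)).biUnion
      (fun y => (H.neighborFinset (f.symm y)).image f) with hB3def
    set B4 : Finset (Fin n) := M.neighborFinset (f v) with hB4def
    set B5 : Finset (Fin n) := {f v} with hB5def
    set Bad : Finset (Fin n) := B1 ∪ (B2 ∪ (B3 ∪ (B4 ∪ B5))) with hBaddef
    -- cardinality bounds
    have hc1 : 160 * B1.card ≤ n :=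
      le_trans (Nat.mul_le_mul_left 160 (Finset.card_image_le)) K5
    have hs2 : B2.card ≤ ∑ x ∈ H.neighborFinset v ∩ S, M.degree (f x)
        + ∑ x ∈ H.neighborFinset v \ S, M.degree (f x) := by
      rw [Finset.sum_inter_add_sum_sdiff]
      refine le_trans Finset.card_biUnion_le ?_
      refine le_of_eq (Finset.sum_congr rfl (fun x _ => ?_))
      exact card_neighborFinset_eq_degree _ _
    have hs2a : 160 * ∑ x ∈ H.neighborFinset v ∩ S, M.degree (f x) ≤ 133 * n := by
      have heq : ∀ x ∈ H.neighborFinset v ∩ S, M.degree (f x) = M.degree (σ x) := by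
        intro x hx
        rw [hf x (Finset.mem_inter.1 hx).2]
      rw [Finset.sum_congr rfl heq]
      exact K4 v hvS
    have hs2b : 160 * ∑ x ∈ H.neighborFinset v \ S, M.degree (f x) ≤ 5 * n := by
      have hlight : ∀ x ∈ H.neighborFinset v \ S, 32 * D * M.degree (f x) ≤ n := by
        intro x hx
        obtain ⟨_, hxS⟩ := Finset.mem_sdiff.1 hx
        by_contra hcon
        push_neg at hcon
        obtain ⟨a, haS, hae⟩ := Finset.mem_image.1 (K2 (f x) hcon)
        rw [← hf a haS] at hae
        exact hxS ((f.injective hae) ▸ haS)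
      have h32 : 32 * D * ∑ x ∈ H.neighborFinset v \ S, M.degree (f x) ≤ D * n := by
        rw [Finset.mul_sum]
        refine le_trans (Finset.sum_le_sum hlight) ?_
        rw [Finset.sum_const, smul_eq_mul]
        refine Nat.mul_le_mul_right n ?_
        refine le_trans (Finset.card_le_card (Finset.sdiff_subset)) ?_
        rw [card_neighborFinset_eq_degree]
        exact hdegH v
      have h32' : D * (32 * ∑ x ∈ H.neighborFinset v \ S, M.degree (f x)) ≤ D * n := by
        calc D * (32 * ∑ x ∈ H.neighborFinset v \ S, M.degree (f x))
            = 32 * D * ∑ x ∈ H.neighborFinset v \ S, M.degree (f x) := by ring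
          _ ≤ D * n := h32
      have := Nat.le_of_mul_le_mul_left h32' (by omega : 0 < D)
      omega
    have hs3 : B3.card ≤ M.degree (f v) * D := by
      refine le_trans Finset.card_biUnion_le ?_
      have hb : ∀ y ∈ M.neighborFinset (f v), ((H.neighborFinset (f.symm y)).image ⇑f).card ≤ D := by
        intro y _
        refine le_trans (Finset.card_image_le) ?_
        rw [card_neighborFinset_eq_degree]
        exact hdegH _
      refine le_trans (Finset.sum_le_sum hb) ?_
      rw [Finset.sum_const, smul_eq_mul, card_neighborFinset_eq_degree]
    have hs3' : 160 * (M.degree (f v) * D) ≤ 5 * n := by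
      have : 160 * (M.degree (f v) * D) = 5 * (32 * D * M.degree (f v)) := by ring
      rw [this]
      omega
    have hc4 : 160 * B4.card ≤ 5 * n := by
      rw [hB4def, card_neighborFinset_eq_degree]
      have h1 : 32 * M.degree (f v) ≤ 32 * D * M.degree (f v) := by
        have := Nat.mul_le_mul_right (M.degree (f v)) (Nat.mul_le_mul_left 32 hD)
        simpa using this
      omega
    have hBadcard : Bad.card < n := by
      have hu1 : Bad.card ≤ B1.card + (B2.card + (B3.card + (B4.card + B5.card))) := by
        refine le_trans (Finset.card_union_le _ _) ?_
        refine Nat.add_le_add_left ?_ _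
        refine le_trans (Finset.card_union_le _ _) ?_
        refine Nat.add_le_add_left ?_ _
        refine le_trans (Finset.card_union_le _ _) ?_
        exact Nat.add_le_add_left (Finset.card_union_le _ _) _
      have hb5 : B5.card = 1 := Finset.card_singleton _
      -- avoid nonlinear terms for omega
      set p2a := ∑ x ∈ H.neighborFinset v ∩ S, M.degree (f x) with hp2a
      set p2b := ∑ x ∈ H.neighborFinset v \ S, M.degree (f x) with hp2b
      set p3 := M.degree (f v) * D with hp3
      omega
    obtain ⟨z, hz⟩ : ∃ z, z ∉ Bad := by
      by_contra hcon
      push_neg at hcon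
      have : Bad = Finset.univ := Finset.eq_univ_iff_forall.2 hcon
      rw [this, Finset.card_univ, Fintype.card_fin] at hBadcard
      omega
    have hz1 : z ∉ B1 := fun h => hz (Finset.mem_union_left _ h)
    have hz2 : z ∉ B2 := fun h => hz (Finset.mem_union_right _ (Finset.mem_union_left _ h))
    have hz3 : z ∉ B3 := fun h => hz (Finset.mem_union_right _ (Finset.mem_union_right _
      (Finset.mem_union_left _ h)))
    have hz4 : z ∉ B4 := fun h => hz (Finset.mem_union_right _ (Finset.mem_union_right _
      (Finset.mem_union_right _ (Finset.mem_union_left _ h))))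
    have hz5 : z ≠ f v := by
      intro h
      exact hz (Finset.mem_union_right _ (Finset.mem_union_right _ (Finset.mem_union_right _
        (Finset.mem_union_right _ (by rw [hB5def, Finset.mem_singleton]; exact h)))))
    -- the swap
    set w : Fin n := f.symm z with hwdef
    have hfw : f w = z := f.apply_symm_apply z
    have hwv : w ≠ v := by
      intro h
      rw [h] at hfw
      exact hz5 hfw.symm
    have hwS : w ∉ S := by
      intro h
      refine hz1 ?_
      rw [hB1def]
      exact Finset.mem_image.2 ⟨w, h, by rw [← hf w h]; exact hfw⟩
    set f' : Equiv.Perm (Fin n) := (Equiv.swap v w).trans f with hf'def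
    have hf'v : f' v = z := by
      rw [hf'def]
      simp only [Equiv.trans_apply, Equiv.swap_apply_left]
      exact hfw
    have hf'w : f' w = f v := by
      rw [hf'def]
      simp only [Equiv.trans_apply, Equiv.swap_apply_right]
    have hf'other : ∀ t, t ≠ v → t ≠ w → f' t = f t := by
      intro t h1 h2
      rw [hf'def]
      simp only [Equiv.trans_apply, Equiv.swap_apply_of_ne_of_ne h1 h2]
    have hf' : ∀ a ∈ S, f' a = σ a := by
      intro a ha
      rw [hf'other a (fun h => hvS (h ▸ ha)) (fun h => hwS (h ▸ ha))]
      exact hf a ha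
    -- no conflicts at v after the swap
    have hnv : ∀ a b : Fin n, H.Adj a b → M.Adj (f' a) (f' b) → a ≠ v := by
      intro a b hab hm2 hav
      subst hav
      by_cases hbw : b = w
      · subst hbw
        rw [hf'v, hf'w] at hm2
        exact hz4 (by rw [hB4def, mem_neighborFinset]; exact hm2.symm)
      · have hbv : b ≠ a := fun h => H.irrefl (h ▸ hab)
        rw [hf'v, hf'other b hbv hbw] at hm2
        refine hz2 ?_
        rw [hB2def]
        refine Finset.mem_biUnion.2 ⟨b, ?_, ?_⟩
        · rw [mem_neighborFinset]; exact hab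
        · rw [mem_neighborFinset]; exact hm2.symm
    -- no conflicts at w after the swap
    have hnw : ∀ a b : Fin n, H.Adj a b → M.Adj (f' a) (f' b) → b ≠ v → a ≠ w := by
      intro a b hab hm2 hbv haw
      subst haw
      have hbw : b ≠ w := fun h => H.irrefl (h ▸ hab)
      rw [hf'w, hf'other b hbv hbw] at hm2
      refine hz3 ?_
      rw [hB3def]
      refine Finset.mem_biUnion.2 ⟨f b, ?_, ?_⟩
      · rw [mem_neighborFinset]; exact hm2
      · rw [f.symm_apply_apply]
        refine Finset.mem_image.2 ⟨w, ?_, hfw⟩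
        rw [mem_neighborFinset]
        exact hab.symm
    -- conflicts strictly decrease
    have hsub : Cf f' ⊆ (Cf f).erase s(u,v) := by
      intro e he'
      revert he'
      induction e using Sym2.ind with
      | _ a b =>
        intro he'
        rw [hCfdef] at he'
        obtain ⟨h1, h2⟩ := Finset.mem_filter.1 he'
        have hab : H.Adj a b := (H.mem_edgeSet).1 (mem_edgeFinset.1 h1)
        rw [Sym2.map_pair_eq, mem_edgeFinset, mem_edgeSet] at h2
        have hav : a ≠ v := hnv a b hab h2
        have hbv : b ≠ v := hnv b a hab.symm h2.symm
        have haw : a ≠ w := hnw a b hab h2 hbv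
        have hbw : b ≠ w := hnw b a hab.symm h2.symm hav
        rw [hf'other a hav haw, hf'other b hbv hbw] at h2
        refine Finset.mem_erase.2 ⟨?_, ?_⟩
        · intro heq
          have : v ∈ s(a, b) := by rw [heq]; exact Sym2.mem_mk_right u v
          rw [Sym2.mem_iff] at this
          rcases this with h | h
          · exact hav h.symm
          · exact hbv h.symm
        · rw [hCfdef]
          refine Finset.mem_filter.2 ⟨h1, ?_⟩
          rw [Sym2.map_pair_eq, mem_edgeFinset, mem_edgeSet]
          exact h2
    have huvCf : s(u,v) ∈ Cf f := by
      rw [hCfdef]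
      refine Finset.mem_filter.2 ⟨mem_edgeFinset.2 ((H.mem_edgeSet).2 huv), ?_⟩
      rw [Sym2.map_pair_eq, mem_edgeFinset, mem_edgeSet]
      exact hMuv
    have hdec : (Cf f').card < (Cf f).card := by
      refine lt_of_le_of_lt (Finset.card_le_card hsub) ?_
      rw [Finset.card_erase_of_mem huvCf]
      omega
    exact ih f' hf' (by omega)

end Phase2


open Finset SimpleGraph

section Core

variable {n D : ℕ} (M H : SimpleGraph (Fin n)) [DecidableRel M.Adj] [DecidableRel H.Adj]

theorem core_embed (hn : 100000000 ≤ n) (hD : 1 ≤ D) (hDn : 40000 * D^2 ≤ n)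
    (hdegH : ∀ v, H.degree v ≤ D)
    (δ : ℕ) (hδ : 1 ≤ δ) (ustar : Fin n) (hust : H.degree ustar ≤ δ)
    (heM : M.edgeFinset.card + δ ≤ n - 1) :
    ∃ f : Equiv.Perm (Fin n), ∀ u v, H.Adj u v → ¬ M.Adj (f u) (f v) := by
  classical
  have hn1 : 1 ≤ n := by omega
  have hsumdeg : ∑ x : Fin n, M.degree x ≤ 2 * n := by
    rw [M.sum_degrees_eq_twice_card_edges]
    omega
  have hQcard_gen : ∀ Q : Finset (Fin n), (∀ x ∈ Q, n < 32 * D * M.degree x) → Q.card ≤ 64 * D := by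
    intro Q hQh
    have h1 : Q.card * (n+1) ≤ 32 * D * ∑ y ∈ Q, M.degree y := by
      calc Q.card * (n+1) = ∑ _y ∈ Q, (n+1) := by rw [Finset.sum_const, smul_eq_mul]
        _ ≤ ∑ y ∈ Q, 32 * D * M.degree y := Finset.sum_le_sum (fun y hy => hQh y hy)
        _ = 32 * D * ∑ y ∈ Q, M.degree y := by rw [Finset.mul_sum]
    have h2 : 32 * D * ∑ y ∈ Q, M.degree y ≤ 64 * D * n := by
      calc 32 * D * ∑ y ∈ Q, M.degree y ≤ 32 * D * (2 * n) := by
            refine Nat.mul_le_mul_left _ ?_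
            exact le_trans (Finset.sum_le_sum_of_subset (Finset.subset_univ Q)) hsumdeg
        _ = 64 * D * n := by ring
    exact my_div_trick (le_trans h1 h2)
  by_cases hsup : ∀ x : Fin n, 4 * M.degree x ≤ 3 * n
  -- ===================== CASE A : no super-heavy vertex =====================
  · set Q : Finset (Fin n) := univ.filter (fun x => n < 32 * D * M.degree x) with hQdef
    have hQheavy : ∀ x ∈ Q, n < 32 * D * M.degree x := fun x hx => (Finset.mem_filter.1 hx).2
    obtain ⟨ψ, hinjQ, _, hindep, hcap⟩ := centers_lemma M H hD hDn hdegH ∅ (by simp) Q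
      (fun x _ => by have := hsup x; omega)
      hQheavy
      (le_trans (Finset.sum_le_sum_of_subset (Finset.subset_univ Q)) hsumdeg)
    haveI : Nonempty (Fin n) := ⟨⟨0, by omega⟩⟩
    set S : Finset (Fin n) := Q.image ψ with hSdef
    set σ : Fin n → Fin n := Function.invFunOn ψ ↑Q with hσdef
    have hσψ : ∀ x ∈ Q, σ (ψ x) = x := by
      intro x hx
      have hex : ∃ a ∈ (↑Q : Set (Fin n)), ψ a = ψ x := ⟨x, Finset.mem_coe.2 hx, rfl⟩
      have h1 := Function.invFunOn_mem hex
      have h2 := Function.invFunOn_eq hex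
      rw [hσdef]
      exact hinjQ h1 (Finset.mem_coe.2 hx) h2
    have hmemS : ∀ a ∈ S, ∃ x ∈ Q, ψ x = a := by
      intro a ha
      obtain ⟨x, hx, he⟩ := Finset.mem_image.1 ha
      exact ⟨x, hx, he⟩
    have K1 : Set.InjOn σ ↑S := by
      intro a ha b hb heq
      obtain ⟨x, hx, hxe⟩ := hmemS a (Finset.mem_coe.1 ha)
      obtain ⟨y, hy, hye⟩ := hmemS b (Finset.mem_coe.1 hb)
      rw [← hxe, ← hye, hσψ x hx, hσψ y hy] at heq
      rw [← hxe, ← hye, heq]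
    have K2 : ∀ x : Fin n, n < 32 * D * M.degree x → x ∈ S.image σ := by
      intro x hx
      have hxQ : x ∈ Q := Finset.mem_filter.2 ⟨Finset.mem_univ x, hx⟩
      exact Finset.mem_image.2 ⟨ψ x, Finset.mem_image_of_mem ψ hxQ, hσψ x hxQ⟩
    have K3 : ∀ a ∈ S, ∀ b ∈ S, H.Adj a b → ¬ M.Adj (σ a) (σ b) := by
      intro a ha b hb hadj
      obtain ⟨x, hx, hxe⟩ := hmemS a ha
      obtain ⟨y, hy, hye⟩ := hmemS b hb
      have hxy : x ≠ y := by
        intro h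
        rw [← hxe, ← hye, h] at hadj
        exact H.irrefl hadj
      exfalso
      refine hindep x hx y hy hxy ?_
      rw [hxe, hye]
      exact hadj
    have K4 : ∀ v, v ∉ S → 160 * ∑ u ∈ (H.neighborFinset v ∩ S), M.degree (σ u) ≤ 133 * n := by
      intro v _
      have himg : H.neighborFinset v ∩ S = (Q.filter (fun x => H.Adj (ψ x) v)).image ψ := by
        ext u
        simp only [Finset.mem_inter, Finset.mem_image, Finset.mem_filter, mem_neighborFinset,
          hSdef]
        constructor
        · rintro ⟨hadj, x, hx, rfl⟩
          exact ⟨x, ⟨hx, hadj.symm⟩, rfl⟩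
        · rintro ⟨x, ⟨hx, hadj⟩, rfl⟩
          exact ⟨hadj.symm, x, hx, rfl⟩
      rw [himg]
      rw [Finset.sum_image (fun x hx y hy h =>
        hinjQ (Finset.mem_coe.2 (Finset.mem_of_mem_filter x hx))
          (Finset.mem_coe.2 (Finset.mem_of_mem_filter y hy)) h)]
      have heq : ∀ x ∈ Q.filter (fun x => H.Adj (ψ x) v), M.degree (σ (ψ x)) = M.degree x := by
        intro x hx
        rw [hσψ x (Finset.mem_of_mem_filter x hx)]
      rw [Finset.sum_congr rfl heq]
      have := hcap v
      omega
    have K5 : 160 * S.card ≤ n := by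
      have h1 : S.card ≤ 64 * D := le_trans Finset.card_image_le (hQcard_gen Q hQheavy)
      nlinarith
    exact phase2 M H hn hD hdegH S σ K1 K2 K3 K4 K5
  -- ===================== CASE B : super-heavy vertex exists =====================
  · push_neg at hsup
    obtain ⟨xstar, hxstar⟩ := hsup
    haveI : Nonempty (Fin n) := ⟨⟨0, by omega⟩⟩
    obtain ⟨φ, hφinj, hφNG, hφlight, hφpair⟩ :=
      super_lemma M H hD hDn hdegH xstar ustar δ hust heM hn1
    have hother : ∀ y : Fin n, y ≠ xstar → 4 * M.degree y ≤ n := by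
      intro y hy
      have h1 := my_pair_degree M y xstar hy
      omega
    set NB : Finset (Fin n) := H.neighborFinset ustar with hNBdef
    set Q : Finset (Fin n) := (univ.filter (fun x => n < 32 * D * M.degree x)).erase xstar
      with hQdef
    have hQheavy : ∀ x ∈ Q, n < 32 * D * M.degree x := fun x hx =>
      (Finset.mem_filter.1 (Finset.mem_of_mem_erase hx)).2
    have hQne : ∀ x ∈ Q, x ≠ xstar := fun x hx => Finset.ne_of_mem_erase hx
    have hQmass : ∀ x ∈ Q, 20 * M.degree x ≤ 15 * n := by
      intro x hx
      have := hother x (hQne x hx)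
      omega
    set F : Finset (Fin n) := insert ustar (NB ∪ NB.biUnion (fun w => H.neighborFinset w))
      with hFdef
    have hFcard : F.card ≤ 2 * D^2 + 2*D + 2 := by
      have h2 : NB.card ≤ D := by
        rw [hNBdef, card_neighborFinset_eq_degree]; exact hdegH _
      have h3 : (NB.biUnion (fun w => H.neighborFinset w)).card ≤ D * D := by
        refine le_trans Finset.card_biUnion_le ?_
        have hb : ∀ c ∈ NB, (H.neighborFinset c).card ≤ D := by
          intro c _
          rw [card_neighborFinset_eq_degree]; exact hdegH c
        calc ∑ c ∈ NB, (H.neighborFinset c).card ≤ ∑ _c ∈ NB, D := Finset.sum_le_sum hb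
          _ = NB.card * D := by rw [Finset.sum_const, smul_eq_mul]
          _ ≤ D * D := Nat.mul_le_mul_right _ h2
      have h4 := Finset.card_union_le NB (NB.biUnion (fun w => H.neighborFinset w))
      have h5 := Finset.card_insert_le ustar (NB ∪ NB.biUnion (fun w => H.neighborFinset w))
      have hDD : D * D = D^2 := by ring
      rw [hFdef]
      omega
    obtain ⟨ψ, hinjQ, hFQ, hindep, hcap⟩ := centers_lemma M H hD hDn hdegH F hFcard Q hQmass
      hQheavy (le_trans (Finset.sum_le_sum_of_subset (Finset.subset_univ Q)) hsumdeg)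
    set S : Finset (Fin n) := insert ustar (NB ∪ Q.image ψ) with hSdef
    have hustar_notin_NB : ustar ∉ NB := fun h => H.irrefl ((mem_neighborFinset _ _ _).1 h)
    have hψ_ne_ustar : ∀ x ∈ Q, ψ x ≠ ustar := fun x hx h =>
      hFQ x hx (by rw [hFdef, h]; exact Finset.mem_insert_self _ _)
    have hψ_notin_NB : ∀ x ∈ Q, ψ x ∉ NB := fun x hx h =>
      hFQ x hx (by rw [hFdef]; exact Finset.mem_insert_of_mem (Finset.mem_union_left _ h))
    have hψ_notadj_NB : ∀ x ∈ Q, ∀ w ∈ NB, ¬ H.Adj w (ψ x) := fun x hx w hw hadj =>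
      hFQ x hx (by
        rw [hFdef]
        refine Finset.mem_insert_of_mem (Finset.mem_union_right _ ?_)
        exact Finset.mem_biUnion.2 ⟨w, hw, (mem_neighborFinset _ _ _).2 hadj⟩)
    set σ : Fin n → Fin n := fun a => if a = ustar then xstar else
      (if a ∈ NB then φ a else Function.invFunOn ψ ↑Q a) with hσdef
    have hσu : σ ustar = xstar := by rw [hσdef]; simp
    have hσNB : ∀ w ∈ NB, σ w = φ w := by
      intro w hw
      rw [hσdef]
      simp only
      rw [if_neg (ne_of_mem_of_not_mem hw hustar_notin_NB), if_pos hw]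
    have hσψ : ∀ x ∈ Q, σ (ψ x) = x := by
      intro x hx
      rw [hσdef]
      simp only
      rw [if_neg (hψ_ne_ustar x hx), if_neg (hψ_notin_NB x hx)]
      have hex : ∃ a ∈ (↑Q : Set (Fin n)), ψ a = ψ x := ⟨x, Finset.mem_coe.2 hx, rfl⟩
      have h1 := Function.invFunOn_mem hex
      have h2 := Function.invFunOn_eq hex
      exact hinjQ h1 (Finset.mem_coe.2 hx) h2
    have hmemS : ∀ a ∈ S, a = ustar ∨ a ∈ NB ∨ ∃ x ∈ Q, ψ x = a := by
      intro a ha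
      rw [hSdef, Finset.mem_insert, Finset.mem_union] at ha
      rcases ha with h | h | h
      · exact Or.inl h
      · exact Or.inr (Or.inl h)
      · obtain ⟨x, hx, he⟩ := Finset.mem_image.1 h
        exact Or.inr (Or.inr ⟨x, hx, he⟩)
    -- light values for NB part
    have hNBlight : ∀ w ∈ NB, 32 * D * M.degree (σ w) ≤ n := by
      intro w hw
      rw [hσNB w hw]
      exact hφlight w hw
    have K1 : Set.InjOn σ ↑S := by
      intro a ha b hb heq
      rcases hmemS a (Finset.mem_coe.1 ha) with h1 | h1 | h1 <;>
        rcases hmemS b (Finset.mem_coe.1 hb) with h2 | h2 | h2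
      · rw [h1, h2]
      · exfalso
        rw [h1, hσu, hσNB b h2] at heq
        exact (hφNG b h2).2 heq.symm
      · exfalso
        obtain ⟨x, hx, rfl⟩ := h2
        rw [h1, hσu, hσψ x hx] at heq
        exact hQne x hx heq.symm
      · exfalso
        rw [h2, hσu, hσNB a h1] at heq
        exact (hφNG a h1).2 heq
      · rw [hσNB a h1, hσNB b h2] at heq
        exact hφinj (Finset.mem_coe.2 h1) (Finset.mem_coe.2 h2) heq
      · exfalso
        obtain ⟨x, hx, rfl⟩ := h2
        rw [hσNB a h1, hσψ x hx] at heq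
        have hl := hφlight a h1
        have hh := hQheavy x hx
        rw [heq] at hl
        omega
      · exfalso
        obtain ⟨x, hx, rfl⟩ := h1
        rw [h2, hσu, hσψ x hx] at heq
        exact hQne x hx heq
      · exfalso
        obtain ⟨x, hx, rfl⟩ := h1
        rw [hσNB b h2, hσψ x hx] at heq
        have hl := hφlight b h2
        have hh := hQheavy x hx
        rw [← heq] at hl
        omega
      · obtain ⟨x, hx, rfl⟩ := h1
        obtain ⟨y, hy, rfl⟩ := h2
        rw [hσψ x hx, hσψ y hy] at heq
        rw [heq]
    have K2 : ∀ x : Fin n, n < 32 * D * M.degree x → x ∈ S.image σ := by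
      intro x hx
      by_cases hxx : x = xstar
      · refine Finset.mem_image.2 ⟨ustar, ?_, by rw [hσu, hxx]⟩
        rw [hSdef]; exact Finset.mem_insert_self _ _
      · have hxQ : x ∈ Q := by
          rw [hQdef]
          exact Finset.mem_erase.2 ⟨hxx, Finset.mem_filter.2 ⟨Finset.mem_univ x, hx⟩⟩
        refine Finset.mem_image.2 ⟨ψ x, ?_, hσψ x hxQ⟩
        rw [hSdef]
        exact Finset.mem_insert_of_mem (Finset.mem_union_right _ (Finset.mem_image_of_mem ψ hxQ))
    have K3 : ∀ a ∈ S, ∀ b ∈ S, H.Adj a b → ¬ M.Adj (σ a) (σ b) := by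
      intro a ha b hb hadj
      rcases hmemS a ha with h1 | h1 | h1 <;> rcases hmemS b hb with h2 | h2 | h2
      · exfalso; rw [h1, h2] at hadj; exact H.irrefl hadj
      · rw [h1, hσu, hσNB b h2]
        exact (hφNG b h2).1
      · exfalso
        obtain ⟨x, hx, rfl⟩ := h2
        rw [h1] at hadj
        exact hψ_notin_NB x hx ((mem_neighborFinset _ _ _).2 hadj)
      · rw [h2, hσu, hσNB a h1]
        intro hM
        exact (hφNG a h1).1 hM.symm
      · rw [hσNB a h1, hσNB b h2]
        refine hφpair a h1 b h2 ?_
        intro he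
        exact H.irrefl (hφinj (Finset.mem_coe.2 h1) (Finset.mem_coe.2 h2) he ▸ hadj)
      · exfalso
        obtain ⟨x, hx, rfl⟩ := h2
        exact hψ_notadj_NB x hx a h1 hadj
      · exfalso
        obtain ⟨x, hx, rfl⟩ := h1
        rw [h2] at hadj
        exact hψ_notin_NB x hx ((mem_neighborFinset _ _ _).2 hadj.symm)
      · exfalso
        obtain ⟨x, hx, rfl⟩ := h1
        exact hψ_notadj_NB x hx b h2 hadj.symm
      · exfalso
        obtain ⟨x, hx, rfl⟩ := h1
        obtain ⟨y, hy, rfl⟩ := h2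
        have hxy : x ≠ y := by
          intro h
          rw [h] at hadj
          exact H.irrefl hadj
        exact hindep x hx y hy hxy hadj
    have K4 : ∀ v, v ∉ S → 160 * ∑ u ∈ (H.neighborFinset v ∩ S), M.degree (σ u) ≤ 133 * n := by
      intro v hvS
      have hnu : ustar ∉ H.neighborFinset v := by
        intro h
        refine hvS ?_
        rw [hSdef]
        refine Finset.mem_insert_of_mem (Finset.mem_union_left _ ?_)
        rw [hNBdef, mem_neighborFinset]
        exact ((mem_neighborFinset _ _ _).1 h).symm
      have hsplit : H.neighborFinset v ∩ S
          = (H.neighborFinset v ∩ NB) ∪ (H.neighborFinset v ∩ Q.image ψ) := by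
        ext a
        simp only [hSdef, Finset.mem_inter, Finset.mem_union, Finset.mem_insert]
        constructor
        · rintro ⟨hav, h | h | h⟩
          · exact absurd (h ▸ hav) hnu
          · exact Or.inl ⟨hav, h⟩
          · exact Or.inr ⟨hav, h⟩
        · rintro (⟨hav, h⟩ | ⟨hav, h⟩)
          · exact ⟨hav, Or.inr (Or.inl h)⟩
          · exact ⟨hav, Or.inr (Or.inr h)⟩
      have hdisj : Disjoint (H.neighborFinset v ∩ NB) (H.neighborFinset v ∩ Q.image ψ) := by
        rw [Finset.disjoint_left]
        intro a ha1 ha2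
        obtain ⟨x, hx, rfl⟩ := Finset.mem_image.1 (Finset.mem_inter.1 ha2).2
        exact hψ_notin_NB x hx (Finset.mem_inter.1 ha1).2
      rw [hsplit, Finset.sum_union hdisj]
      -- part 1 : light
      have hp1 : 160 * ∑ u ∈ H.neighborFinset v ∩ NB, M.degree (σ u) ≤ 5 * n := by
        have h1 : 32 * D * ∑ u ∈ H.neighborFinset v ∩ NB, M.degree (σ u) ≤ D * n := by
          rw [Finset.mul_sum]
          have hb : ∀ u ∈ H.neighborFinset v ∩ NB, 32 * D * M.degree (σ u) ≤ n := by
            intro u hu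
            exact hNBlight u (Finset.mem_inter.1 hu).2
          refine le_trans (Finset.sum_le_sum hb) ?_
          rw [Finset.sum_const, smul_eq_mul]
          refine Nat.mul_le_mul_right n ?_
          refine le_trans (Finset.card_le_card Finset.inter_subset_left) ?_
          rw [card_neighborFinset_eq_degree]
          exact hdegH v
        have h2 : D * (32 * ∑ u ∈ H.neighborFinset v ∩ NB, M.degree (σ u)) ≤ D * n := by
          calc D * (32 * ∑ u ∈ H.neighborFinset v ∩ NB, M.degree (σ u))
              = 32 * D * ∑ u ∈ H.neighborFinset v ∩ NB, M.degree (σ u) := by ring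
            _ ≤ D * n := h1
        have := Nat.le_of_mul_le_mul_left h2 (by omega : 0 < D)
        omega
      -- part 2 : centers
      have hp2 : 160 * ∑ u ∈ H.neighborFinset v ∩ Q.image ψ, M.degree (σ u) ≤ 128 * n := by
        have himg : H.neighborFinset v ∩ Q.image ψ
            = (Q.filter (fun x => H.Adj (ψ x) v)).image ψ := by
          ext u
          simp only [Finset.mem_inter, Finset.mem_image, Finset.mem_filter, mem_neighborFinset]
          constructor
          · rintro ⟨hadj, x, hx, rfl⟩
            exact ⟨x, ⟨hx, hadj.symm⟩, rfl⟩
          · rintro ⟨x, ⟨hx, hadj⟩, rfl⟩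
            exact ⟨hadj.symm, x, hx, rfl⟩
        rw [himg]
        rw [Finset.sum_image (fun x hx y hy h =>
          hinjQ (Finset.mem_coe.2 (Finset.mem_of_mem_filter x hx))
            (Finset.mem_coe.2 (Finset.mem_of_mem_filter y hy)) h)]
        have heq : ∀ x ∈ Q.filter (fun x => H.Adj (ψ x) v), M.degree (σ (ψ x)) = M.degree x := by
          intro x hx
          rw [hσψ x (Finset.mem_of_mem_filter x hx)]
        rw [Finset.sum_congr rfl heq]
        have := hcap v
        omega
      omega
    have K5 : 160 * S.card ≤ n := by
      have h2 : NB.card ≤ D := by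
        rw [hNBdef, card_neighborFinset_eq_degree]; exact hdegH _
      have h3 : (Q.image ψ).card ≤ 64 * D :=
        le_trans Finset.card_image_le (hQcard_gen Q hQheavy)
      have h4 := Finset.card_union_le NB (Q.image ψ)
      have h5 := Finset.card_insert_le ustar (NB ∪ Q.image ψ)
      have h6 : S.card ≤ 65 * D + 1 := by rw [hSdef]; omega
      nlinarith
    exact phase2 M H hn hD hdegH S σ K1 K2 K3 K4 K5

end Core



open Finset SimpleGraph


theorem universality_for_sparse_spanning_graphs :
    ∃ n₀ : ℕ, ∀ n : ℕ, n₀ ≤ n → ∀ δ : ℕ, 1 ≤ δ →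
      ∀ G : SimpleGraph (Fin n),
        (n - 1).choose 2 + δ - 1 < G.edgeSet.ncard →
        ∀ (H : SimpleGraph (Fin n)) [DecidableRel H.Adj],
          (∀ v : Fin n, 0 < H.degree v) →
          H.minDegree ≤ δ →
          (H.maxDegree : ℝ) ≤ Real.sqrt n / 200 →
          ContainsCopy G H := by
  classical
  refine ⟨100000000, ?_⟩
  intro n hn δ hδ G hedge H _ hdeg0 hminδ hmax
  letI : DecidableRel G.Adj := Classical.decRel _
  set M : SimpleGraph (Fin n) := Gᶜ with hMdef
  letI : DecidableRel M.Adj := Classical.decRel _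
  haveI : Nonempty (Fin n) := ⟨⟨0, by omega⟩⟩
  set D := H.maxDegree with hDdef
  have hD : 1 ≤ D := le_trans (hdeg0 ⟨0, by omega⟩) (H.degree_le_maxDegree _)
  have hDn : 40000 * D^2 ≤ n := by
    have h200 : (200 * (D:ℝ)) ≤ Real.sqrt n := by
      rw [le_div_iff₀ (by norm_num : (0:ℝ) < 200)] at hmax
      linarith
    have hsq : (200*(D:ℝ))^2 ≤ (n : ℝ) := by
      have h2 : (0:ℝ) ≤ 200*(D:ℝ) := by positivity
      nlinarith [h200, h2, Real.sq_sqrt (show (0:ℝ) ≤ (n:ℝ) by positivity),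
        Real.sqrt_nonneg (n:ℝ)]
    have h1 : ((40000 * D^2 : ℕ) : ℝ) ≤ (n : ℝ) := by
      push_cast
      nlinarith
    exact_mod_cast h1
  have hedge' : (n-1).choose 2 + δ - 1 < G.edgeFinset.card := by
    have h1 : G.edgeSet.ncard = G.edgeFinset.card := by
      rw [← SimpleGraph.coe_edgeFinset, Set.ncard_coe_finset]
    omega
  have htot : G.edgeFinset.card + M.edgeFinset.card = n.choose 2 := by
    have hdis : Disjoint G.edgeFinset M.edgeFinset :=
      (SimpleGraph.disjoint_edgeFinset).2 disjoint_compl_right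
    have htop : ((⊤ : SimpleGraph (Fin n)).edgeFinset).card = n.choose 2 := by
      rw [card_edgeFinset_top_eq_card_choose_two, Fintype.card_fin]
    have huni : G.edgeFinset ∪ M.edgeFinset = (⊤ : SimpleGraph (Fin n)).edgeFinset := by
      ext e
      induction e using Sym2.ind with
      | _ a b =>
        simp only [Finset.mem_union, mem_edgeFinset, mem_edgeSet, hMdef, compl_adj, top_adj]
        constructor
        · rintro (h | h)
          · exact h.ne
          · exact h.1
        · intro h
          by_cases hG : G.Adj a b
          · exact Or.inl hG
          · exact Or.inr ⟨h, hG⟩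
    rw [← htop, ← huni, Finset.card_union_of_disjoint hdis]
  have hch : n.choose 2 = (n-1) + (n-1).choose 2 := by
    have hn' : n = (n-1) + 1 := by omega
    conv_lhs => rw [hn']
    rw [Nat.choose_succ_succ, Nat.choose_one_right]
  have heM : M.edgeFinset.card + δ ≤ n - 1 := by omega
  obtain ⟨ustar, hustar⟩ := H.exists_minimal_degree_vertex
  have hust : H.degree ustar ≤ δ := by rw [← hustar]; exact hminδ
  obtain ⟨f, hf⟩ := core_embed M H hn hD hDn (fun v => H.degree_le_maxDegree v) δ hδ ustar
    hust heM
  refine ⟨f, f.injective, ?_⟩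
  intro u v huv
  have h1 := hf u v huv
  have hne : f u ≠ f v := f.injective.ne (H.ne_of_adj huv)
  by_contra hG
  exact h1 ((G.compl_adj (f u) (f v)).2 ⟨hne, hG⟩)
end

section
/- Let k ≥ 3 be such that (k+6)/2 is an integer, let n = k(k+6)/2 + 1, and let H be the simple graph on n vertices consisting of k vertex-disjoint cliques of size (n−1)/k = (k+6)/2 each, together with one additional vertex joined to δ vertices of the cliques, where 1 ≤ δ ≤ (n−1)/k − 1. Then the graph obtained from the complete graph K_n by deleting all edges inside a fixed set of k+2 vertices contains no subgraph isomorphic to H, and hence ex(n,H) ≥ C(n,2) − C(k+2,2) > C(n−1,2) + δ(H) − 1. -/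
/-- The extremal number `ex(n, H)`: the maximum number of edges in a simple graph on
`n` vertices containing no subgraph isomorphic to `H`. -/
noncomputable def exNum (n : ℕ) {β : Type*} (H : SimpleGraph β) : ℕ :=
  sSup {m | ∃ G : SimpleGraph (Fin n), ¬ ContainsCopy G H ∧ m = G.edgeSet.ncard}

/-- The graph consisting of `k` vertex-disjoint cliques of size `m` each (the vertices
`some (i, j)` with fixed clique-index `i`), together with one additional vertex `none`
joined exactly to the vertices in `A`. -/
def cliquesPlusVertex (k m : ℕ) (A : Finset (Fin k × Fin m)) :
    SimpleGraph (Option (Fin k × Fin m)) :=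
  SimpleGraph.fromRel (fun u v =>
    match u, v with
    | some p, some q => p.1 = q.1
    | none, some q => q ∈ A
    | _, _ => False)

/-- The complete graph with all edges inside `W` deleted. -/
def completeMinusClique {V : Type*} (W : Finset V) : SimpleGraph V :=
  SimpleGraph.fromRel (fun u v => u ∉ W ∨ v ∉ W)

instance {V : Type*} [DecidableEq V] (W : Finset V) :
    DecidableRel (completeMinusClique W).Adj :=
  fun a b => decidable_of_iff _ (SimpleGraph.fromRel_adj _ a b).symm

lemma cmc_adj {V : Type*} {W : Finset V} {u v : V} :
    (completeMinusClique W).Adj u v ↔ u ≠ v ∧ (u ∉ W ∨ v ∉ W) := by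
  rw [completeMinusClique, SimpleGraph.fromRel_adj]; tauto

lemma cmc_compl_adj {V : Type*} {W : Finset V} {u v : V} :
    (completeMinusClique W)ᶜ.Adj u v ↔ u ≠ v ∧ u ∈ W ∧ v ∈ W := by
  rw [SimpleGraph.compl_adj, cmc_adj]; tauto

lemma cmc_compl_nbhd {V : Type*} [Fintype V] [DecidableEq V] (W : Finset V) (v : V) :
    (completeMinusClique W)ᶜ.neighborFinset v = if v ∈ W then W.erase v else ∅ := by
  ext u
  simp only [SimpleGraph.mem_neighborFinset, cmc_compl_adj]
  by_cases hv : v ∈ W <;> simp [hv, Finset.mem_erase, eq_comm] <;> tauto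

lemma two_mul_compl_edges {V : Type*} [Fintype V] [DecidableEq V] (W : Finset V) :
    2 * (completeMinusClique W)ᶜ.edgeFinset.card = W.card * (W.card - 1) := by
  rw [← SimpleGraph.sum_degrees_eq_twice_card_edges]
  have : ∀ v : V, (completeMinusClique W)ᶜ.degree v = if v ∈ W then W.card - 1 else 0 := by
    intro v
    rw [SimpleGraph.degree, cmc_compl_nbhd]
    split <;> simp [Finset.card_erase_of_mem, *]
  simp_rw [this]
  rw [Finset.sum_ite_mem, Finset.univ_inter, Finset.sum_const, smul_eq_mul]

lemma two_mul_choose_two (x : ℕ) : 2 * x.choose 2 = x * (x - 1) := by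
  rw [Nat.choose_two_right, Nat.mul_div_cancel']
  cases x with
  | zero => simp
  | succ y => simpa [Nat.mul_comm] using (Nat.even_mul_succ_self y).two_dvd

lemma cmc_card_edges {V : Type*} [Fintype V] [DecidableEq V] (W : Finset V) :
    (completeMinusClique W).edgeFinset.card =
      (Fintype.card V).choose 2 - W.card.choose 2 := by
  classical
  have hU : (⊤ : SimpleGraph V).edgeFinset =
      (completeMinusClique W).edgeFinset ∪ (completeMinusClique W)ᶜ.edgeFinset := by
    ext e
    induction e with
    | _ a b =>
      simp only [Finset.mem_union, SimpleGraph.mem_edgeFinset, SimpleGraph.mem_edgeSet,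
        SimpleGraph.top_adj, SimpleGraph.compl_adj]
      constructor
      · intro h; by_cases hG : (completeMinusClique W).Adj a b
        · exact Or.inl hG
        · exact Or.inr ⟨h, hG⟩
      · rintro (h | ⟨h, -⟩); exacts [h.ne, h]
  have hd : Disjoint (completeMinusClique W).edgeFinset (completeMinusClique W)ᶜ.edgeFinset :=
    SimpleGraph.disjoint_edgeFinset.mpr disjoint_compl_right
  have htot : (completeMinusClique W).edgeFinset.card + (completeMinusClique W)ᶜ.edgeFinset.card
      = (Fintype.card V).choose 2 := by
    rw [← Finset.card_union_of_disjoint hd, ← hU,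
      SimpleGraph.card_edgeFinset_top_eq_card_choose_two]
  have h1 := two_mul_compl_edges W
  have h2 := two_mul_choose_two W.card
  omega

lemma ncard_edgeSet {V : Type*} [Fintype V] [DecidableEq V] (G : SimpleGraph V)
    [DecidableRel G.Adj] : G.edgeSet.ncard = G.edgeFinset.card := by
  rw [← SimpleGraph.coe_edgeFinset, Set.ncard_coe_finset]

lemma cpv_adj_some {k m : ℕ} {A : Finset (Fin k × Fin m)} {p q : Fin k × Fin m}
    (hne : p ≠ q) (h1 : p.1 = q.1) :
    (cliquesPlusVertex k m A).Adj (some p) (some q) := by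
  rw [cliquesPlusVertex, SimpleGraph.fromRel_adj]
  exact ⟨by simpa using hne, Or.inl h1⟩

lemma no_copy (k m : ℕ) (A : Finset (Fin k × Fin m))
    (W : Finset (Option (Fin k × Fin m))) (hW : W.card = k + 2) :
    ¬ ContainsCopy (completeMinusClique W) (cliquesPlusVertex k m A) := by
  rintro ⟨f, hinj, hmap⟩
  have hsurj : Function.Surjective f := Finite.surjective_of_injective hinj
  have hfi : ∀ w, f (Function.invFun f w) = w := fun w => Function.invFun_eq (hsurj w)
  set h : Option (Fin k × Fin m) → Option (Fin k) :=
    fun w => Option.map Prod.fst (Function.invFun f w) with hh_def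
  have hinjOn : Set.InjOn h ↑W := by
    intro w hw w' hw' hhw
    have hx : f (Function.invFun f w) = w := hfi w
    have hx' : f (Function.invFun f w') = w' := hfi w'
    simp only [hh_def] at hhw
    rcases hc : Function.invFun f w with _ | p <;>
      rcases hc' : Function.invFun f w' with _ | p' <;>
      rw [hc] at hhw hx <;> rw [hc'] at hhw hx'
    · rw [← hx, ← hx']
    · simp at hhw
    · simp at hhw
    · simp only [Option.map_some, Option.some.injEq] at hhw
      by_cases hpq : p = p'
      · rw [← hx, ← hx', hpq]
      · exfalso
        have hadj := hmap _ _ (cpv_adj_some hpq hhw)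
        rw [hx, hx', cmc_adj] at hadj
        exact hadj.2.elim (fun h => h hw) (fun h => h hw')
  have hle : W.card ≤ Fintype.card (Option (Fin k)) := by
    rw [← Finset.card_univ]
    exact Finset.card_le_card_of_injOn h (fun a _ => Finset.mem_univ _) hinjOn
  simp [hW, Fintype.card_option] at hle

lemma arith (k m δ : ℕ) (hk : 3 ≤ k) (hm : 2 * m = k + 6) (hδ1 : 1 ≤ δ) (hδ2 : δ ≤ m - 1) :
    (k * m).choose 2 + δ - 1 < (k * m + 1).choose 2 - (k + 2).choose 2 := by
  have h1 : 2 * (k * m) = k * k + 6 * k := by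
    calc 2 * (k * m) = k * (2 * m) := by ring
    _ = k * (k + 6) := by rw [hm]
    _ = k * k + 6 * k := by ring
  have h2 : 2 * ((k + 2).choose 2) = k * k + 3 * k + 2 := by
    rw [two_mul_choose_two]; simp; ring
  have h3 : (k * m + 1).choose 2 = (k * m).choose 2 + k * m := by
    rw [Nat.choose_succ_succ, Nat.choose_one_right, Nat.add_comm]
  rw [h3]
  generalize (k * m).choose 2 = c
  generalize hp : k * m = p at h1
  generalize ha : (k + 2).choose 2 = a at h2
  generalize hq : k * k = q at h1 h2
  omega

theorem max_degree_condition_optimal (k m δ n : ℕ) (hk : 3 ≤ k) (hm : 2 * m = k + 6)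
    (hn : n = k * (k + 6) / 2 + 1)
    (hδ1 : 1 ≤ δ) (hδ2 : δ ≤ m - 1)
    (A : Finset (Fin k × Fin m)) (hA : A.card = δ)
    (W : Finset (Option (Fin k × Fin m))) (hW : W.card = k + 2) :
    ¬ ContainsCopy (completeMinusClique W) (cliquesPlusVertex k m A) ∧
    (completeMinusClique W).edgeSet.ncard = n.choose 2 - (k + 2).choose 2 ∧
    n.choose 2 - (k + 2).choose 2 ≤ exNum n (cliquesPlusVertex k m A) ∧
    (n - 1).choose 2 + δ - 1 < n.choose 2 - (k + 2).choose 2 := by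
  have hn' : n = k * m + 1 := by
    subst hn
    have h : k * (k + 6) = 2 * (k * m) := by rw [← hm]; ring
    rw [h, Nat.mul_div_cancel_left _ (by norm_num : 0 < 2)]
  have hcardV : Fintype.card (Option (Fin k × Fin m)) = n := by
    simp [Fintype.card_option, hn']
  have hedge : (completeMinusClique W).edgeSet.ncard = n.choose 2 - (k + 2).choose 2 := by
    rw [ncard_edgeSet, cmc_card_edges, hcardV, hW]
  refine ⟨no_copy k m A W hW, hedge, ?_, ?_⟩
  · -- exNum lower bound
    classical
    have e : Fin n ≃ Option (Fin k × Fin m) := Fintype.equivOfCardEq (by simp [hcardV])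
    set G' : SimpleGraph (Fin n) := (completeMinusClique W).comap e with hG'
    have hncc : ¬ ContainsCopy G' (cliquesPlusVertex k m A) := by
      rintro ⟨f, hi, hmap⟩
      exact no_copy k m A W hW ⟨e ∘ f, e.injective.comp hi, fun u v h => hmap u v h⟩
    have hiso : G' ≃g completeMinusClique W := ⟨e, Iff.rfl⟩
    have hcardeq : G'.edgeSet.ncard = (completeMinusClique W).edgeSet.ncard := by
      rw [← Nat.card_coe_set_eq, ← Nat.card_coe_set_eq]
      exact Nat.card_congr hiso.mapEdgeSet
    apply le_csSup
    · refine ⟨n.choose 2, ?_⟩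
      rintro x ⟨G, -, rfl⟩
      have : G.edgeSet.ncard = G.edgeFinset.card := ncard_edgeSet G
      rw [this]
      simpa using SimpleGraph.card_edgeFinset_le_card_choose_two (G := G)
    · exact ⟨G', hncc, by rw [hcardeq, hedge]⟩
  · have := arith k m δ hk hm hδ1 hδ2
    rw [hn']
    simpa using this
end

section
/- There exists n₀ such that for every n ≥ n₀ the following holds: let 1 ≤ δ ≤ √n/200 and let G be a simple graph on n vertices with exactly n − δ − 1 edges, and let v_1 be a vertex of maximum degree of G. Then there exists an independent set S of G with |S| ≥ δ such that S is disjoint from N[v_1] (i.e., no vertex of S equals or is adjacent to v_1) and every vertex of S has degree smaller than 2√n in G. -/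
set_option maxHeartbeats 1000000

/-- Greedy: if the number of ordered adjacent pairs inside `T` plus `2δ` is at most `2|T|`,
then `T` contains an independent set of size at least `δ`. -/
lemma aux_indep {V : Type*} [DecidableEq V] (G : SimpleGraph V) [DecidableRel G.Adj] (δ : ℕ) :
    ∀ T : Finset V, ((T ×ˢ T).filter (fun p => G.Adj p.1 p.2)).card + 2 * δ ≤ 2 * T.card →
    ∃ S, S ⊆ T ∧ (∀ u ∈ S, ∀ w ∈ S, u ≠ w → ¬ G.Adj u w) ∧ δ ≤ S.card := by
  intro T
  induction T using Finset.strongInduction with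
  | _ T ih =>
    intro hT
    by_cases h : ∀ u ∈ T, ∀ w ∈ T, u ≠ w → ¬ G.Adj u w
    · exact ⟨T, subset_rfl, h, by omega⟩
    · push_neg at h
      obtain ⟨u, hu, w, hw, hne, hadj⟩ := h
      have hss : T.erase u ⊂ T := Finset.erase_ssubset hu
      have h1 : (w, u) ∉ ((T.erase u ×ˢ T.erase u).filter (fun p => G.Adj p.1 p.2)) := by
        simp [Finset.mem_erase]
      have h2 : (u, w) ∉ insert (w, u)
          ((T.erase u ×ˢ T.erase u).filter (fun p => G.Adj p.1 p.2)) := by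
        simp [Finset.mem_erase, hne]
      have hsub : insert (u, w) (insert (w, u)
          ((T.erase u ×ˢ T.erase u).filter (fun p => G.Adj p.1 p.2)))
          ⊆ (T ×ˢ T).filter (fun p => G.Adj p.1 p.2) := by
        intro p hp
        simp only [Finset.mem_insert, Finset.mem_filter, Finset.mem_product,
          Finset.mem_erase] at hp ⊢
        rcases hp with rfl | rfl | ⟨⟨⟨_, hp1⟩, ⟨_, hp2⟩⟩, hp3⟩
        · exact ⟨⟨hu, hw⟩, hadj⟩
        · exact ⟨⟨hw, hu⟩, hadj.symm⟩
        · exact ⟨⟨hp1, hp2⟩, hp3⟩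
      have hcard : ((T.erase u ×ˢ T.erase u).filter (fun p => G.Adj p.1 p.2)).card + 2
          ≤ ((T ×ˢ T).filter (fun p => G.Adj p.1 p.2)).card := by
        have := Finset.card_le_card hsub
        rwa [Finset.card_insert_of_notMem h2, Finset.card_insert_of_notMem h1] at this
      have hTcard : (T.erase u).card = T.card - 1 := Finset.card_erase_of_mem hu
      have hTpos : 1 ≤ T.card := Finset.card_pos.mpr ⟨u, hu⟩
      obtain ⟨S, hS1, hS2, hS3⟩ := ih (T.erase u) hss (by omega)
      exact ⟨S, hS1.trans (Finset.erase_subset _ _), hS2, hS3⟩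

theorem independent_set_avoiding_max_degree_vertex :
    ∃ n₀ : ℕ, ∀ n : ℕ, n₀ ≤ n → ∀ δ : ℕ, 1 ≤ δ → (δ : ℝ) ≤ Real.sqrt n / 200 →
      ∀ (G : SimpleGraph (Fin n)) [DecidableRel G.Adj],
        G.edgeFinset.card = n - δ - 1 →
        ∀ v₁ : Fin n, (∀ u : Fin n, G.degree u ≤ G.degree v₁) →
          ∃ S : Finset (Fin n),
            (∀ u ∈ S, ∀ w ∈ S, u ≠ w → ¬ G.Adj u w) ∧
            δ ≤ S.card ∧
            (∀ u ∈ S, u ≠ v₁ ∧ ¬ G.Adj v₁ u) ∧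
            (∀ u ∈ S, (G.degree u : ℝ) < 2 * Real.sqrt n) := by
  classical
  use 1
  intro n hn δ hδ1 hδsqrt G _ hcard v₁ hmax
  -- basic real facts
  have hn1 : (1 : ℝ) ≤ (n : ℝ) := by exact_mod_cast hn
  have h200 : (200 : ℝ) ≤ Real.sqrt n := by
    have : (1 : ℝ) ≤ (δ : ℝ) := by exact_mod_cast hδ1
    nlinarith [hδsqrt]
  have hsqn : Real.sqrt n * Real.sqrt n = (n : ℝ) := Real.mul_self_sqrt (by linarith)
  have hsqrt_le : Real.sqrt n ≤ (n : ℝ) := by nlinarith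
  have hδn : δ + 1 ≤ n := by
    have h1 : (δ : ℝ) ≤ (n : ℝ) / 200 := le_trans hδsqrt (by linarith)
    have h2 : (n : ℝ) / 200 < (n : ℝ) := by nlinarith
    have : (δ : ℝ) < (n : ℝ) := lt_of_le_of_lt h1 h2
    have := Nat.cast_lt.mp this
    omega
  have hm : G.edgeFinset.card + δ + 1 = n := by omega
  -- the bad sets
  set Nv : Finset (Fin n) := insert v₁ (G.neighborFinset v₁) with hNv
  set Hs : Finset (Fin n) :=
    (Finset.univ.filter (fun u => 2 * Real.sqrt n ≤ (G.degree u : ℝ))) \ Nv with hHs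
  set R : Finset (Fin n) := Nv ∪ Hs with hR
  set T : Finset (Fin n) := Finset.univ \ R with hT
  have hdisj : Disjoint Nv Hs := Finset.disjoint_sdiff
  -- counting: ordered adjacent pairs in T
  have hPsub : (T ×ˢ T).filter (fun p => G.Adj p.1 p.2)
      ⊆ T.biUnion (fun v => ({v} : Finset (Fin n)) ×ˢ G.neighborFinset v) := by
    intro p hp
    simp only [Finset.mem_filter, Finset.mem_product] at hp
    simp only [Finset.mem_biUnion, Finset.mem_product, Finset.mem_singleton,
      SimpleGraph.mem_neighborFinset]
    exact ⟨p.1, hp.1.1, rfl, hp.2⟩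
  have hP : ((T ×ˢ T).filter (fun p => G.Adj p.1 p.2)).card ≤ ∑ v ∈ T, G.degree v := by
    calc ((T ×ˢ T).filter (fun p => G.Adj p.1 p.2)).card
        ≤ (T.biUnion (fun v => ({v} : Finset (Fin n)) ×ˢ G.neighborFinset v)).card :=
          Finset.card_le_card hPsub
      _ ≤ ∑ v ∈ T, (({v} : Finset (Fin n)) ×ˢ G.neighborFinset v).card :=
          Finset.card_biUnion_le
      _ = ∑ v ∈ T, G.degree v := by
          apply Finset.sum_congr rfl
          intro v _
          rw [Finset.card_product, Finset.card_singleton, one_mul,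
            SimpleGraph.card_neighborFinset_eq_degree]
  -- sum of degrees split
  have hsum : ∑ v ∈ T, G.degree v + ∑ v ∈ R, G.degree v = 2 * G.edgeFinset.card := by
    rw [Finset.sum_sdiff (Finset.subset_univ R)]
    exact G.sum_degrees_eq_twice_card_edges
  -- lower bound on degree sum over R
  have hv₁notin : v₁ ∉ G.neighborFinset v₁ := by simp
  have hsumNv : 2 * G.degree v₁ ≤ ∑ v ∈ Nv, G.degree v := by
    rw [hNv, Finset.sum_insert hv₁notin]
    have : ∑ v ∈ G.neighborFinset v₁, 1 ≤ ∑ v ∈ G.neighborFinset v₁, G.degree v := by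
      apply Finset.sum_le_sum
      intro w hw
      rw [SimpleGraph.mem_neighborFinset] at hw
      have : v₁ ∈ G.neighborFinset w := by simp [hw.symm]
      have := Finset.card_pos.mpr ⟨v₁, this⟩
      exact this
    simp only [Finset.sum_const, smul_eq_mul, mul_one] at this
    rw [SimpleGraph.card_neighborFinset_eq_degree] at this
    omega
  have hsumHs : 2 * Hs.card ≤ ∑ v ∈ Hs, G.degree v := by
    have : ∑ v ∈ Hs, 2 ≤ ∑ v ∈ Hs, G.degree v := by
      apply Finset.sum_le_sum
      intro h hh
      rw [hHs, Finset.mem_sdiff, Finset.mem_filter] at hh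
      have h2 : (2 : ℝ) ≤ (G.degree h : ℝ) := by
        have := hh.1.2
        nlinarith
      exact_mod_cast h2
    simpa [Finset.sum_const, mul_comm] using this
  have hsumR : 2 * G.degree v₁ + 2 * Hs.card ≤ ∑ v ∈ R, G.degree v := by
    rw [hR, Finset.sum_union hdisj]
    omega
  -- cardinalities
  have hcardNv : Nv.card = G.degree v₁ + 1 := by
    rw [hNv, Finset.card_insert_of_notMem hv₁notin, SimpleGraph.card_neighborFinset_eq_degree]
  have hcardR : R.card = G.degree v₁ + 1 + Hs.card := by
    rw [hR, Finset.card_union_of_disjoint hdisj, hcardNv]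
  have hcardT : T.card + R.card = n := by
    rw [hT, Finset.card_sdiff_of_subset (Finset.subset_univ R)]
    have := Finset.card_le_univ R
    simp only [Finset.card_univ, Fintype.card_fin] at *
    omega
  -- apply the greedy lemma
  have hmain : ((T ×ˢ T).filter (fun p => G.Adj p.1 p.2)).card + 2 * δ ≤ 2 * T.card := by
    omega
  obtain ⟨S, hST, hSind, hScard⟩ := aux_indep G δ T hmain
  refine ⟨S, hSind, hScard, ?_, ?_⟩
  · intro u hu
    have := hST hu
    rw [hT, Finset.mem_sdiff] at this
    have hnotR := this.2
    rw [hR, Finset.mem_union, not_or, hNv, Finset.mem_insert, not_or,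
      SimpleGraph.mem_neighborFinset] at hnotR
    exact ⟨hnotR.1.1, hnotR.1.2⟩
  · intro u hu
    have := hST hu
    rw [hT, Finset.mem_sdiff] at this
    have hnotR := this.2
    rw [hR, Finset.mem_union, not_or, hHs, Finset.mem_sdiff, not_and, not_not] at hnotR
    by_contra hge
    push_neg at hge
    have : u ∈ Nv := hnotR.2 (by simp [hge])
    exact hnotR.1 this
end

section
/- There exists n₀ such that for every n ≥ n₀ the following holds: let 1 ≤ δ ≤ √n/200, let G be a simple graph on n vertices with exactly n − δ − 1 edges, let v_1, …, v_n be an ordering of its vertices with d(v_1) ≥ d(v_2) ≥ … ≥ d(v_n), and let B be any set of δ vertices each of degree at most 2√n in G. Then for every i with 2 ≤ i ≤ n there exists an independent set S of G with |S| ≥ n/18 such that S is disjoint from N[v_i] ∪ N[B] and every vertex of S has degree at most 10 in G. -/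
open Finset
open scoped Classical

variable {V : Type*} [Fintype V] [DecidableEq V]

/-- Greedy independent set among low-degree vertices. -/
lemma greedy_indep (G : SimpleGraph V) [DecidableRel G.Adj] :
    ∀ W : Finset V, (∀ u ∈ W, G.degree u ≤ 10) →
      ∃ S : Finset V, S ⊆ W ∧ (∀ u ∈ S, ∀ w ∈ S, u ≠ w → ¬ G.Adj u w) ∧
        W.card ≤ 11 * S.card := by
  intro W
  induction W using Finset.strongInduction with
  | _ W ih =>
    intro hdeg
    rcases W.eq_empty_or_nonempty with rfl | ⟨w, hw⟩
    · exact ⟨∅, by simp, by simp, by simp⟩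
    · set W' := W.filter (fun u => u ≠ w ∧ ¬ G.Adj w u) with hW'
      have hwW' : w ∉ W' := by simp [hW']
      have hss : W' ⊂ W := ⟨Finset.filter_subset _ _, fun h => hwW' (h hw)⟩
      obtain ⟨S, hSsub, hSind, hScard⟩ := ih W' hss
        (fun u hu => hdeg u (Finset.filter_subset _ _ hu))
      have hwS : w ∉ S := fun h => hwW' (hSsub h)
      refine ⟨insert w S, ?_, ?_, ?_⟩
      · exact Finset.insert_subset hw (hSsub.trans (Finset.filter_subset _ _))
      · intro u hu x hx hux
        rcases Finset.mem_insert.mp hu with h | h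
        · rcases Finset.mem_insert.mp hx with h' | h'
          · exact absurd (h.trans h'.symm) hux
          · subst h; exact (Finset.mem_filter.mp (hSsub h')).2.2
        · rcases Finset.mem_insert.mp hx with h' | h'
          · subst h'
            exact fun had => (Finset.mem_filter.mp (hSsub h)).2.2 had.symm
          · exact hSind u h x h' hux
      · have hcover : W \ W' ⊆ insert w (G.neighborFinset w) := by
          intro u hu
          rw [Finset.mem_sdiff] at hu
          obtain ⟨huW, huW'⟩ := hu
          rw [hW', Finset.mem_filter] at huW'
          push_neg at huW'
          rcases Classical.em (u = w) with rfl | hne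
          · exact Finset.mem_insert_self _ _
          · exact Finset.mem_insert_of_mem (by
              rw [SimpleGraph.mem_neighborFinset]; exact huW' huW hne)
        have h1 : (W \ W').card ≤ 11 := by
          calc (W \ W').card ≤ (insert w (G.neighborFinset w)).card :=
                Finset.card_le_card hcover
            _ ≤ (G.neighborFinset w).card + 1 := Finset.card_insert_le _ _
            _ ≤ 11 := by
                rw [SimpleGraph.card_neighborFinset_eq_degree]
                have := hdeg w hw; omega
        have h2 : (W \ W').card + W'.card = W.card :=
          Finset.card_sdiff_add_card_eq_card (Finset.filter_subset _ _)
        have h3 : (insert w S).card = S.card + 1 := Finset.card_insert_of_notMem hwS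
        omega

noncomputable def inEdges (G : SimpleGraph V) [DecidableRel G.Adj] (W : Finset V) :
    Finset (Sym2 V) :=
  G.edgeFinset.filter (fun e => ∀ x ∈ e, x ∈ W)

lemma mem_inEdges {G : SimpleGraph V} [DecidableRel G.Adj] {W : Finset V} {e : Sym2 V} :
    e ∈ inEdges G W ↔ e ∈ G.edgeFinset ∧ ∀ x ∈ e, x ∈ W := by
  unfold inEdges; exact Finset.mem_filter

lemma cover_indep (G : SimpleGraph V) [DecidableRel G.Adj] :
    ∀ W : Finset V, ∃ S : Finset V, S ⊆ W ∧ (∀ u ∈ S, ∀ w ∈ S, u ≠ w → ¬ G.Adj u w) ∧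
      W.card ≤ S.card + (inEdges G W).card := by
  intro W
  induction W using Finset.strongInduction with
  | _ W ih =>
    by_cases hind : ∀ u ∈ W, ∀ w ∈ W, u ≠ w → ¬ G.Adj u w
    · exact ⟨W, subset_rfl, hind, Nat.le_add_right _ _⟩
    · push_neg at hind
      obtain ⟨u, hu, w, hw, hne, hadj⟩ := hind
      have hss : W.erase u ⊂ W := Finset.erase_ssubset hu
      obtain ⟨S, h1, h2, h3⟩ := ih _ hss
      refine ⟨S, h1.trans (Finset.erase_subset _ _), h2, ?_⟩
      have hmono : inEdges G (W.erase u) ⊆ inEdges G W := by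
        intro e he
        rw [mem_inEdges] at he ⊢
        exact ⟨he.1, fun x hx => Finset.erase_subset _ _ (he.2 x hx)⟩
      have hmem : s(u, w) ∈ inEdges G W := by
        rw [mem_inEdges]
        refine ⟨SimpleGraph.mem_edgeFinset.mpr hadj, ?_⟩
        intro x hx
        rcases Sym2.mem_iff.mp hx with rfl | rfl
        · exact hu
        · exact hw
      have hnmem : s(u, w) ∉ inEdges G (W.erase u) := by
        rw [mem_inEdges]
        rintro ⟨-, h⟩
        have := h u (Sym2.mem_mk_left _ _)
        simp at this
      have hlt : (inEdges G (W.erase u)).card < (inEdges G W).card :=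
        Finset.card_lt_card ((Finset.ssubset_iff_of_subset hmono).mpr ⟨_, hmem, hnmem⟩)
      have hWc : (W.erase u).card + 1 = W.card := Finset.card_erase_add_one hu
      omega

lemma sym2_filter_card_le (e : Sym2 V) (T : Finset V) :
    (T.filter (fun x => x ∈ e)).card ≤ 2 := by
  induction e with
  | _ a b =>
    have hsub : (T.filter (fun x => x ∈ (s(a, b) : Sym2 V))) ⊆ {a, b} := by
      intro x hx
      rw [Finset.mem_filter, Sym2.mem_iff] at hx
      simp only [Finset.mem_insert, Finset.mem_singleton]
      exact hx.2
    calc (T.filter (fun x => x ∈ (s(a, b) : Sym2 V))).card ≤ ({a, b} : Finset V).card :=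
          Finset.card_le_card hsub
      _ ≤ 2 := (Finset.card_insert_le _ _).trans (by simp)

lemma double_count (F : Finset (Sym2 V)) (T : Finset V)
    (h9 : ∀ x ∈ T, 9 ≤ (F.filter (fun e => x ∈ e)).card) :
    9 * T.card ≤ 2 * F.card := by
  have key : ∑ x ∈ T, (F.filter (fun e => x ∈ e)).card
      = ∑ e ∈ F, (T.filter (fun x => x ∈ e)).card := by
    simp_rw [Finset.card_filter]
    exact Finset.sum_comm
  have h1 : 9 * T.card ≤ ∑ x ∈ T, (F.filter (fun e => x ∈ e)).card := by
    have : ∑ _x ∈ T, 9 ≤ ∑ x ∈ T, (F.filter (fun e => x ∈ e)).card :=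
      Finset.sum_le_sum h9
    simpa [mul_comm] using this
  have h2 : ∑ e ∈ F, (T.filter (fun x => x ∈ e)).card ≤ 2 * F.card := by
    have : ∑ e ∈ F, (T.filter (fun x => x ∈ e)).card ≤ ∑ _e ∈ F, 2 :=
      Finset.sum_le_sum (fun e _ => sym2_filter_card_le e T)
    simpa [mul_comm] using this
  omega

lemma incidence_inter_card_le (G : SimpleGraph V) [DecidableRel G.Adj] {a b : V} (hab : a ≠ b) :
    (G.incidenceFinset a ∩ G.incidenceFinset b).card ≤ 1 := by
  rw [Finset.card_le_one]
  intro e he f hf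
  rw [Finset.mem_inter, SimpleGraph.mem_incidenceFinset, SimpleGraph.mem_incidenceFinset] at he hf
  have he' : e = s(a, b) := (Sym2.mem_and_mem_iff hab).mp ⟨he.1.2, he.2.2⟩
  have hf' : f = s(a, b) := (Sym2.mem_and_mem_iff hab).mp ⟨hf.1.2, hf.2.2⟩
  rw [he', hf']

theorem large_independent_sets_avoiding_neighborhoods :
    ∃ n₀ : ℕ, ∀ n : ℕ, n₀ ≤ n → ∀ δ : ℕ, 1 ≤ δ → (δ : ℝ) ≤ Real.sqrt n / 200 →
      ∀ (G : SimpleGraph (Fin n)) [DecidableRel G.Adj],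
        G.edgeFinset.card = n - δ - 1 →
        ∀ v : Fin n → Fin n, Function.Bijective v →
          (∀ i j : Fin n, i ≤ j → G.degree (v j) ≤ G.degree (v i)) →
          ∀ B : Finset (Fin n), B.card = δ →
            (∀ b ∈ B, (G.degree b : ℝ) ≤ 2 * Real.sqrt n) →
            -- for every `i` with (1-indexed) `2 ≤ i ≤ n`, i.e. 0-indexed `1 ≤ i`:
            ∀ i : Fin n, 1 ≤ (i : ℕ) →
              ∃ S : Finset (Fin n),
                (∀ u ∈ S, ∀ w ∈ S, u ≠ w → ¬ G.Adj u w) ∧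
                (n : ℝ) / 18 ≤ S.card ∧
                (∀ u ∈ S, u ≠ v i ∧ ¬ G.Adj (v i) u) ∧
                (∀ u ∈ S, u ∉ B ∧ ∀ b ∈ B, ¬ G.Adj b u) ∧
                (∀ u ∈ S, G.degree u ≤ 10) := by
  use 1000
  intro n hn δ hδ1 hδsqrt G instDec hE v hv hmono B hB hBdeg i hi
  haveI : NeZero n := ⟨by omega⟩
  -- basic real facts
  have hnr : (1000 : ℝ) ≤ (n : ℝ) := by exact_mod_cast hn
  have hn0 : (0 : ℝ) ≤ (n : ℝ) := by linarith
  have hsq : Real.sqrt n * Real.sqrt n = (n : ℝ) := Real.mul_self_sqrt hn0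
  have hsqle : Real.sqrt n ≤ (n : ℝ) := by
    nlinarith [sq_nonneg (Real.sqrt n - 1), Real.sqrt_nonneg (n : ℝ)]
  have hδr : (δ : ℝ) ≤ (n : ℝ) / 200 := by
    calc (δ : ℝ) ≤ Real.sqrt n / 200 := hδsqrt
      _ ≤ (n : ℝ) / 200 := by linarith
  have hδn : δ + 1 ≤ n := by
    have : ((δ : ℕ) : ℝ) + 1 ≤ (n : ℝ) := by linarith
    exact_mod_cast this
  -- main objects
  set D := G.degree (v i) with hD
  set d0 := G.degree (v 0) with hd0def
  have hD0 : D ≤ d0 := hmono 0 i (Fin.zero_le i)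
  have hdall : ∀ u : Fin n, G.degree u ≤ d0 := by
    intro u
    obtain ⟨j, rfl⟩ := hv.surjective u
    exact hmono 0 j (Fin.zero_le j)
  have hvne : v 0 ≠ v i := by
    intro h
    have h2 := hv.injective h
    have h3 : ((0 : Fin n) : ℕ) = (i : ℕ) := by rw [h2]
    simp at h3
    omega
  set Highs := Finset.univ.filter (fun u : Fin n => 11 ≤ G.degree u) with hHighs
  set H := Highs.card with hHcard
  set PB := ∑ b ∈ B, G.degree b with hPBdef
  set W := Finset.univ.filter (fun u : Fin n => G.degree u ≤ 10 ∧ u ≠ v i ∧ ¬ G.Adj (v i) u ∧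
      u ∉ B ∧ ∀ b ∈ B, ¬ G.Adj b u) with hWdef
  have hWmem : ∀ u ∈ W, G.degree u ≤ 10 ∧ u ≠ v i ∧ ¬ G.Adj (v i) u ∧
      u ∉ B ∧ ∀ b ∈ B, ¬ G.Adj b u := fun u hu => (Finset.mem_filter.mp hu).2
  -- cardinality of complement of W
  have card1 : n ≤ W.card + H + (D + 1) + (δ + PB) := by
    have hcov : (Finset.univ : Finset (Fin n)) ⊆
        W ∪ (Highs ∪ (insert (v i) (G.neighborFinset (v i)) ∪
          (B ∪ B.biUnion (fun b => G.neighborFinset b)))) := by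
      intro u _
      simp only [Finset.mem_union]
      by_cases h1 : G.degree u ≤ 10
      · by_cases h2 : u = v i
        · subst h2; right; right; left; exact Finset.mem_insert_self _ _
        · by_cases h3 : G.Adj (v i) u
          · right; right; left
            refine Finset.mem_insert_of_mem ?_
            rw [SimpleGraph.mem_neighborFinset]; exact h3
          · by_cases h4 : u ∈ B
            · right; right; right; left; exact h4
            · by_cases h5 : ∀ b ∈ B, ¬ G.Adj b u
              · left; rw [hWdef, Finset.mem_filter]
                exact ⟨Finset.mem_univ _, h1, h2, h3, h4, h5⟩
              · push_neg at h5
                obtain ⟨b, hb, hba⟩ := h5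
                right; right; right; right
                refine Finset.mem_biUnion.mpr ⟨b, hb, ?_⟩
                rw [SimpleGraph.mem_neighborFinset]; exact hba
      · right; left; rw [hHighs, Finset.mem_filter]
        exact ⟨Finset.mem_univ _, by omega⟩
    have hcard := Finset.card_le_card hcov
    rw [Finset.card_univ, Fintype.card_fin] at hcard
    have c1 := Finset.card_union_le W (Highs ∪ (insert (v i) (G.neighborFinset (v i)) ∪
          (B ∪ B.biUnion (fun b => G.neighborFinset b))))
    have c2 := Finset.card_union_le Highs (insert (v i) (G.neighborFinset (v i)) ∪
          (B ∪ B.biUnion (fun b => G.neighborFinset b)))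
    have c3 := Finset.card_union_le (insert (v i) (G.neighborFinset (v i)))
          (B ∪ B.biUnion (fun b => G.neighborFinset b))
    have c4 := Finset.card_union_le B (B.biUnion (fun b => G.neighborFinset b))
    have c5 := Finset.card_insert_le (v i) (G.neighborFinset (v i))
    have c6 : (B.biUnion (fun b => G.neighborFinset b)).card ≤ PB := by
      calc (B.biUnion (fun b => G.neighborFinset b)).card
          ≤ ∑ b ∈ B, (G.neighborFinset b).card := Finset.card_biUnion_le
        _ = PB := by
            rw [hPBdef]
            exact Finset.sum_congr rfl (fun b _ => G.card_neighborFinset_eq_degree b)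
    have c7 : (G.neighborFinset (v i)).card = D := G.card_neighborFinset_eq_degree (v i)
    have c8 : B.card = δ := hB
    omega
  -- bound on PB
  have hPBr : (PB : ℝ) ≤ (n : ℝ) / 100 := by
    have h1 : (PB : ℝ) = ∑ b ∈ B, (G.degree b : ℝ) := by
      rw [hPBdef]; push_cast; ring
    have h2 : ∑ b ∈ B, (G.degree b : ℝ) ≤ ∑ _b ∈ B, 2 * Real.sqrt n :=
      Finset.sum_le_sum hBdeg
    rw [Finset.sum_const, hB, nsmul_eq_mul] at h2
    have h3 : (δ : ℝ) * (2 * Real.sqrt n) ≤ (Real.sqrt n / 200) * (2 * Real.sqrt n) := by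
      apply mul_le_mul_of_nonneg_right hδsqrt
      positivity
    rw [h1]
    calc ∑ b ∈ B, (G.degree b : ℝ) ≤ (δ : ℝ) * (2 * Real.sqrt n) := h2
      _ ≤ (Real.sqrt n / 200) * (2 * Real.sqrt n) := h3
      _ = (n : ℝ) / 100 := by rw [div_mul_eq_mul_div]; nlinarith [hsq]
  -- incidence membership helper
  have hinc : ∀ (a : Fin n) (e : Sym2 (Fin n)),
      e ∈ G.incidenceFinset a ↔ e ∈ G.edgeFinset ∧ a ∈ e := by
    intro a e
    simp [SimpleGraph.mem_incidenceFinset, SimpleGraph.incidenceSet, SimpleGraph.mem_edgeFinset]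
  by_cases hcase : (n : ℝ) / 9 + (n : ℝ) / 50 + 20 ≤ 2 * (D : ℝ) + 7 * (H : ℝ)
  · -- vertex-cover bound
    have hd011 : 11 ≤ d0 := by
      by_contra hcon
      push_neg at hcon
      have hD10 : D ≤ 10 := by omega
      have hH0 : H = 0 := by
        rw [hHcard, Finset.card_eq_zero, hHighs]
        rw [Finset.filter_eq_empty_iff]
        intro u _
        have := hdall u
        omega
      have hDr : (D : ℝ) ≤ 10 := by exact_mod_cast hD10
      have hHr : (H : ℝ) = 0 := by rw [hH0]; norm_num
      rw [hHr] at hcase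
      linarith
    obtain ⟨S, hSW, hSind, hScard⟩ := cover_indep G W
    set m := (inEdges G W).card with hm
    set A0 := G.incidenceFinset (v 0) with hA0
    set Ai := G.incidenceFinset (v i) with hAi
    set H' := (Highs.erase (v 0)).erase (v i) with hH'
    classical
    set F := G.edgeFinset.filter (fun e => (∃ x ∈ e, x ∈ H') ∧ v 0 ∉ e ∧ v i ∉ e) with hF
    have hH'highs : ∀ x ∈ H', x ≠ v i ∧ x ≠ v 0 ∧ 11 ≤ G.degree x := by
      intro x hx
      rw [hH', Finset.mem_erase, Finset.mem_erase] at hx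
      refine ⟨hx.1, hx.2.1, ?_⟩
      have := hx.2.2
      rw [hHighs, Finset.mem_filter] at this
      exact this.2
    -- each vertex of H' has ≥ 9 edges in F
    have h9 : ∀ x ∈ H', 9 ≤ (F.filter (fun e => x ∈ e)).card := by
      intro x hx
      obtain ⟨hx1, hx2, hx3⟩ := hH'highs x hx
      have hsub : G.incidenceFinset x \ (A0 ∪ Ai) ⊆ F.filter (fun e => x ∈ e) := by
        intro e he
        rw [Finset.mem_sdiff, Finset.mem_union] at he
        obtain ⟨hei, hnot⟩ := he
        push_neg at hnot
        rw [hinc] at hei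
        have hv0 : v 0 ∉ e := fun h => hnot.1 (by rw [hA0, hinc]; exact ⟨hei.1, h⟩)
        have hvi : v i ∉ e := fun h => hnot.2 (by rw [hAi, hinc]; exact ⟨hei.1, h⟩)
        rw [Finset.mem_filter, hF, Finset.mem_filter]
        exact ⟨⟨hei.1, ⟨x, hei.2, hx⟩, hv0, hvi⟩, hei.2⟩
      have hc1 : (G.incidenceFinset x ∩ A0).card ≤ 1 := incidence_inter_card_le G hx2
      have hc2 : (G.incidenceFinset x ∩ Ai).card ≤ 1 := incidence_inter_card_le G hx1
      have hcov2 : G.incidenceFinset x ⊆ (G.incidenceFinset x \ (A0 ∪ Ai)) ∪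
          ((G.incidenceFinset x ∩ A0) ∪ (G.incidenceFinset x ∩ Ai)) := by
        intro e he
        simp only [Finset.mem_union, Finset.mem_sdiff, Finset.mem_inter]
        by_cases h0 : e ∈ A0
        · right; left; exact ⟨he, h0⟩
        · by_cases h1 : e ∈ Ai
          · right; right; exact ⟨he, h1⟩
          · left; exact ⟨he, by tauto⟩
      have hcc := Finset.card_le_card hcov2
      have hcu1 := Finset.card_union_le (G.incidenceFinset x \ (A0 ∪ Ai))
          ((G.incidenceFinset x ∩ A0) ∪ (G.incidenceFinset x ∩ Ai))
      have hcu2 := Finset.card_union_le (G.incidenceFinset x ∩ A0) (G.incidenceFinset x ∩ Ai)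
      have hdx : (G.incidenceFinset x).card = G.degree x := G.card_incidenceFinset_eq_degree x
      have hsc := Finset.card_le_card hsub
      omega
    have hDC : 9 * H'.card ≤ 2 * F.card := double_count F H' h9
    have hH'card : H ≤ H'.card + 2 := by
      have e1 : Highs.card - 1 ≤ (Highs.erase (v 0)).card := Finset.pred_card_le_card_erase
      have e2 : (Highs.erase (v 0)).card - 1 ≤ ((Highs.erase (v 0)).erase (v i)).card :=
        Finset.pred_card_le_card_erase
      have e3 : (Highs.erase (v 0)).card ≤ Highs.card := Finset.card_erase_le
      rw [hH']
      omega
    -- disjointness of inEdges W from A0 ∪ Ai ∪ F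
    have hdisj : Disjoint (inEdges G W) (A0 ∪ Ai ∪ F) := by
      rw [Finset.disjoint_left]
      intro e he hU
      rw [mem_inEdges] at he
      rcases Finset.mem_union.mp hU with hU' | hUF
      · rcases Finset.mem_union.mp hU' with h0 | h1
        · have hvW : v 0 ∈ W := he.2 _ ((hinc _ _).mp (hA0 ▸ h0)).2
          have := (hWmem _ hvW).1
          omega
        · have hvW : v i ∈ W := he.2 _ ((hinc _ _).mp (hAi ▸ h1)).2
          exact (hWmem _ hvW).2.1 rfl
      · rw [hF, Finset.mem_filter] at hUF
        obtain ⟨x, hxe, hxH'⟩ := hUF.2.1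
        have hxW : x ∈ W := he.2 x hxe
        have h11 := (hH'highs x hxH').2.2
        have := (hWmem x hxW).1
        omega
    have hsub2 : inEdges G W ∪ (A0 ∪ Ai ∪ F) ⊆ G.edgeFinset := by
      intro e he
      rcases Finset.mem_union.mp he with h | h
      · exact (mem_inEdges.mp h).1
      · rcases Finset.mem_union.mp h with h' | h'
        · rcases Finset.mem_union.mp h' with h'' | h''
          · exact ((hinc _ _).mp (hA0 ▸ h'')).1
          · exact ((hinc _ _).mp (hAi ▸ h'')).1
        · exact Finset.filter_subset _ _ h'
    have hcard2 : m + (A0 ∪ Ai ∪ F).card ≤ G.edgeFinset.card := by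
      rw [hm, ← Finset.card_union_of_disjoint hdisj]
      exact Finset.card_le_card hsub2
    have hFdisj : Disjoint (A0 ∪ Ai) F := by
      rw [Finset.disjoint_left]
      intro e he heF
      rw [hF, Finset.mem_filter] at heF
      rcases Finset.mem_union.mp he with h | h
      · exact heF.2.2.1 ((hinc _ _).mp (hA0 ▸ h)).2
      · exact heF.2.2.2 ((hinc _ _).mp (hAi ▸ h)).2
    have hcardU : (A0 ∪ Ai ∪ F).card = (A0 ∪ Ai).card + F.card :=
      Finset.card_union_of_disjoint hFdisj
    have hunion : d0 + D ≤ (A0 ∪ Ai).card + 1 := by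
      have hi1 := Finset.card_union_add_card_inter A0 Ai
      have hi2 : (A0 ∩ Ai).card ≤ 1 := incidence_inter_card_le G hvne
      have hi3 : A0.card = d0 := G.card_incidenceFinset_eq_degree (v 0)
      have hi4 : Ai.card = D := G.card_incidenceFinset_eq_degree (v i)
      omega
    have hedge : 2 * m + 4 * D + 9 * H ≤ 2 * G.edgeFinset.card + 20 := by omega
    have twoD7H : 2 * D + 7 * H ≤ 2 * S.card + 2 * PB + 20 := by
      have hEn : G.edgeFinset.card + δ + 1 = n := by omega
      omega
    refine ⟨S, hSind, ?_, fun u hu => ⟨(hWmem u (hSW hu)).2.1, (hWmem u (hSW hu)).2.2.1⟩,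
      fun u hu => ⟨(hWmem u (hSW hu)).2.2.2.1, (hWmem u (hSW hu)).2.2.2.2⟩,
      fun u hu => (hWmem u (hSW hu)).1⟩
    have hr : 2 * (D : ℝ) + 7 * (H : ℝ) ≤ 2 * (S.card : ℝ) + 2 * (PB : ℝ) + 20 := by
      exact_mod_cast twoD7H
    linarith
  · -- greedy bound
    push_neg at hcase
    obtain ⟨S, hSW, hSind, hScard⟩ := greedy_indep G W (fun u hu => (hWmem u hu).1)
    refine ⟨S, hSind, ?_, fun u hu => ⟨(hWmem u (hSW hu)).2.1, (hWmem u (hSW hu)).2.2.1⟩,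
      fun u hu => ⟨(hWmem u (hSW hu)).2.2.2.1, (hWmem u (hSW hu)).2.2.2.2⟩,
      fun u hu => (hWmem u (hSW hu)).1⟩
    have hr1 : (n : ℝ) ≤ (W.card : ℝ) + (H : ℝ) + ((D : ℝ) + 1) + ((δ : ℝ) + (PB : ℝ)) := by
      exact_mod_cast card1
    have hr2 : (W.card : ℝ) ≤ 11 * (S.card : ℝ) := by exact_mod_cast hScard
    have hr3 : (0 : ℝ) ≤ (H : ℝ) := Nat.cast_nonneg _
    linarith
end

section
/- Let n ≥ 6 and let H be a simple graph on n vertices containing a vertex v of degree exactly 2 whose two neighbors x and y are adjacent in H, and in which every vertex other than v has degree at least 3. Let T be the graph obtained from the complete graph K_n by deleting the edge set of a star with n−3 edges (a vertex a joined to all vertices except two vertices b and c) together with the single edge {b,c}. Then T has C(n−1,2) + 1 edges and contains no subgraph isomorphic to H. -/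
/-- The graph obtained from the complete graph by deleting the star consisting of all
edges from `a` to vertices other than `b` and `c`, together with the edge `{b, c}`.
Thus `a` is adjacent exactly to `b` and `c`, and `b`, `c` are not adjacent. -/
def completeMinusStarMinusEdge {V : Type*} (a b c : V) : SimpleGraph V :=
  SimpleGraph.fromRel (fun u w =>
    (u = a → w = b ∨ w = c) ∧ (w = a → u = b ∨ u = c) ∧
    ¬(u = b ∧ w = c) ∧ ¬(u = c ∧ w = b))

section Aux

variable {V : Type*} {a b c : V}

lemma cmse_adj_iff (u w : V) :
    (completeMinusStarMinusEdge a b c).Adj u w ↔ u ≠ w ∧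
      (u = a → w = b ∨ w = c) ∧ (w = a → u = b ∨ u = c) ∧
      ¬(u = b ∧ w = c) ∧ ¬(u = c ∧ w = b) := by
  simp only [completeMinusStarMinusEdge, SimpleGraph.fromRel_adj]
  tauto

instance cmse_decAdj [DecidableEq V] :
    DecidableRel (completeMinusStarMinusEdge a b c).Adj := fun u w =>
  decidable_of_iff _ (cmse_adj_iff u w).symm

lemma cmse_adj_a (hab : a ≠ b) (hac : a ≠ c) (w : V) :
    (completeMinusStarMinusEdge a b c).Adj a w ↔ w = b ∨ w = c := by
  rw [cmse_adj_iff]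
  constructor
  · tauto
  · rintro (rfl | rfl)
    · exact ⟨hab, fun _ => Or.inl rfl, fun hba => absurd hba.symm hab, by tauto, by tauto⟩
    · exact ⟨hac, fun _ => Or.inr rfl, fun hca => absurd hca.symm hac, by tauto, by tauto⟩

lemma cmse_not_adj_bc : ¬ (completeMinusStarMinusEdge a b c).Adj b c := by
  rw [cmse_adj_iff]; tauto

variable [Fintype V] [DecidableEq V]

lemma cmse_nbhd_a (hab : a ≠ b) (hac : a ≠ c) :
    (completeMinusStarMinusEdge a b c).neighborFinset a = {b, c} := by
  ext w
  simp [SimpleGraph.mem_neighborFinset, cmse_adj_a hab hac]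

lemma cmse_degree_a (hab : a ≠ b) (hac : a ≠ c) (hbc : b ≠ c) :
    (completeMinusStarMinusEdge a b c).degree a = 2 := by
  rw [SimpleGraph.degree, cmse_nbhd_a hab hac, Finset.card_pair hbc]

lemma cmse_degree_ne_a (hab : a ≠ b) (hac : a ≠ c) (hbc : b ≠ c)
    (u : V) (hu : u ≠ a) :
    (completeMinusStarMinusEdge a b c).degree u = Fintype.card V - 2 := by
  have key : ∃ s, u ≠ s ∧
      (completeMinusStarMinusEdge a b c).neighborFinset u = Finset.univ \ {u, s} := by
    by_cases hub : u = b
    · subst hub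
      refine ⟨c, hbc, ?_⟩
      ext w
      rw [SimpleGraph.mem_neighborFinset, cmse_adj_iff]
      simp only [Finset.mem_sdiff, Finset.mem_univ, Finset.mem_insert,
        Finset.mem_singleton, true_and]
      constructor
      · rintro ⟨h1, h2, h3, h4, h5⟩
        push_neg
        exact ⟨Ne.symm h1, h4⟩
      · intro h
        push_neg at h
        exact ⟨Ne.symm h.1, fun hba => absurd hba.symm hab, fun _ => Or.inl trivial, h.2,
          fun hp => hbc hp.1⟩
    · by_cases huc : u = c
      · subst huc
        refine ⟨b, Ne.symm hbc, ?_⟩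
        ext w
        rw [SimpleGraph.mem_neighborFinset, cmse_adj_iff]
        simp only [Finset.mem_sdiff, Finset.mem_univ, Finset.mem_insert,
          Finset.mem_singleton, true_and]
        constructor
        · rintro ⟨h1, h2, h3, h4, h5⟩
          push_neg
          exact ⟨Ne.symm h1, h5⟩
        · intro h
          push_neg at h
          exact ⟨Ne.symm h.1, fun hca => absurd hca.symm hac, fun _ => Or.inr trivial,
            fun hp => hbc hp.1.symm, h.2⟩
      · refine ⟨a, hu, ?_⟩
        ext w
        rw [SimpleGraph.mem_neighborFinset, cmse_adj_iff]
        simp only [Finset.mem_sdiff, Finset.mem_univ, Finset.mem_insert,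
          Finset.mem_singleton, true_and]
        constructor
        · rintro ⟨h1, h2, h3, h4, h5⟩
          push_neg
          refine ⟨Ne.symm h1, fun hwa => ?_⟩
          rcases h3 hwa with h' | h'
          · exact hub h'
          · exact huc h'
        · intro h
          push_neg at h
          exact ⟨Ne.symm h.1, fun h' => absurd h' hu, fun h' => absurd h' h.2,
            fun hp => hub hp.1, fun hp => huc hp.1⟩
  obtain ⟨s, hs, hset⟩ := key
  rw [SimpleGraph.degree, hset, Finset.card_sdiff_of_subset (Finset.subset_univ _),
    Finset.card_univ, Finset.card_pair hs]

lemma cmse_card_edges (hab : a ≠ b) (hac : a ≠ c) (hbc : b ≠ c) (hn : 2 ≤ Fintype.card V) :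
    2 * (completeMinusStarMinusEdge a b c).edgeFinset.card
      = 2 + (Fintype.card V - 1) * (Fintype.card V - 2) := by
  rw [← SimpleGraph.sum_degrees_eq_twice_card_edges]
  rw [← Finset.sum_erase_add Finset.univ _ (Finset.mem_univ a), add_comm,
    cmse_degree_a hab hac hbc]
  congr 1
  rw [Finset.sum_congr rfl (fun u hu => cmse_degree_ne_a hab hac hbc u
    (Finset.ne_of_mem_erase hu)), Finset.sum_const, Finset.card_erase_of_mem (Finset.mem_univ a),
    Finset.card_univ, smul_eq_mul]

end Aux

theorem second_extremal_graph (n : ℕ) (hn : 6 ≤ n)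
    (H : SimpleGraph (Fin n)) [DecidableRel H.Adj]
    (v x y : Fin n) (hxy : x ≠ y) (hvx : H.Adj v x) (hvy : H.Adj v y)
    (hdegv : H.degree v = 2) (hadjxy : H.Adj x y)
    (hdeg : ∀ u : Fin n, u ≠ v → 3 ≤ H.degree u)
    (a b c : Fin n) (hab : a ≠ b) (hac : a ≠ c) (hbc : b ≠ c) :
    (completeMinusStarMinusEdge a b c).edgeSet.ncard = (n - 1).choose 2 + 1 ∧
    ¬ ContainsCopy (completeMinusStarMinusEdge a b c) H := by
  constructor
  · -- edge count
    have hcard : Fintype.card (Fin n) = n := Fintype.card_fin n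
    have h1 : 2 * (completeMinusStarMinusEdge a b c).edgeFinset.card
        = 2 + (n - 1) * (n - 2) := by
      rw [cmse_card_edges hab hac hbc (by omega), hcard]
    have h2 : 2 * ((n - 1).choose 2 + 1) = 2 + (n - 1) * (n - 2) := by
      rw [Nat.choose_two_right]
      have he : n - 1 - 1 = n - 2 := by omega
      rw [he]
      have hdvd : 2 ∣ (n - 1) * (n - 2) := by
        have hev := Nat.even_mul_succ_self (n - 2)
        rw [(by omega : n - 2 + 1 = n - 1), mul_comm] at hev
        exact hev.two_dvd
      rw [Nat.mul_add, Nat.mul_div_cancel' hdvd]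
      omega
    have he : (completeMinusStarMinusEdge a b c).edgeSet.ncard
        = (completeMinusStarMinusEdge a b c).edgeFinset.card := by
      rw [SimpleGraph.edgeFinset, Set.ncard_eq_toFinset_card']
    rw [he]
    exact Nat.eq_of_mul_eq_mul_left two_pos (h1.trans h2.symm)
  · rintro ⟨f, hinj, hmap⟩
    have hbij : Function.Bijective f := Finite.injective_iff_bijective.mp hinj
    have hfv : f v = a := by
      by_contra hne
      obtain ⟨u, hu⟩ := hbij.surjective a
      have huv : u ≠ v := by rintro rfl; exact hne hu
      have h3 := hdeg u huv
      have hsub : (H.neighborFinset u).image f ⊆ {b, c} := by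
        intro w hw
        simp only [Finset.mem_image] at hw
        obtain ⟨z, hz, rfl⟩ := hw
        have hadj := hmap u z ((SimpleGraph.mem_neighborFinset H u z).mp hz)
        rw [hu] at hadj
        have := (cmse_adj_a hab hac (f z)).mp hadj
        simpa [Finset.mem_insert, Finset.mem_singleton] using this
      have hle := Finset.card_le_card hsub
      rw [Finset.card_image_of_injective _ hinj] at hle
      have : ({b, c} : Finset (Fin n)).card ≤ 2 :=
        le_trans (Finset.card_insert_le _ _) (by simp)
      have : H.degree u ≤ 2 := le_trans hle this
      omega
    have hx : f x = b ∨ f x = c := by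
      have := hmap v x hvx; rw [hfv] at this
      exact (cmse_adj_a hab hac (f x)).mp this
    have hy : f y = b ∨ f y = c := by
      have := hmap v y hvy; rw [hfv] at this
      exact (cmse_adj_a hab hac (f y)).mp this
    have hfxy : f x ≠ f y := fun h => hxy (hinj h)
    have hadj := hmap x y hadjxy
    rcases hx with hx | hx <;> rcases hy with hy | hy <;> rw [hx, hy] at hadj hfxy
    · exact hfxy rfl
    · exact cmse_not_adj_bc hadj
    · exact cmse_not_adj_bc hadj.symm
    · exact hfxy rfl
end

section
/- There exists s₀ such that for every integer s ≥ s₀ the following holds. Let n = 1 + 5s and let H be the 3-uniform hypergraph described in the context. Then ex(n−1, 𝓛) = 0, where 𝓛 = {H(v) : v a vertex of H} is the set of all links of H, and ex(n,H) ≥ C(n−2,3) + (4/3)·C(n−2,2) = C(n−1,3) + (1/3)·C(n−2,2) > C(n−1,3) + ex(n−1, 𝓛). -/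
/-- A 3-uniform hypergraph (given by its set of edges) `TG` contains a copy of `TH`:
there is an injection of vertices mapping every edge of `TH` to an edge of `TG`. -/
def Contains3 {α β : Type*} [DecidableEq α] (TG : Set (Finset α)) (TH : Set (Finset β)) :
    Prop :=
  ∃ f : β → α, Function.Injective f ∧ ∀ e ∈ TH, e.image f ∈ TG

/-- The edges of the 3-uniform hypergraph `H` on `V₁ ∪ ⋯ ∪ V_s ∪ {x}` (vertex `none`
is `x` and vertex `some (i, j)` is the `j`-th element of `Vᵢ`): all 3-element subsets
of each 5-element set `Vᵢ`, together with one additional edge `{x, u, v}` with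
`u, v ∈ V_{i₁}`. -/
def HEdges (s : ℕ) (i₁ : Fin s) (u v : Fin 5) : Set (Finset (Option (Fin s × Fin 5))) :=
  {e | (e.card = 3 ∧ ∃ i : Fin s, ∀ w ∈ e, ∃ j : Fin 5, w = some (i, j)) ∨
       e = {none, some (i₁, u), some (i₁, v)}}

/-- The link of a vertex `w` in a 3-uniform hypergraph with edge set `E`: the graph on
the remaining vertices in which `a, b` are adjacent iff `{w, a, b} ∈ E`. -/
def link {V : Type*} [DecidableEq V] (E : Set (Finset V)) (w : V) :
    SimpleGraph {z : V // z ≠ w} :=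
  SimpleGraph.fromRel (fun a b => ({w, a.val, b.val} : Finset V) ∈ E)

/-- `ex(m, 𝓛)` for the family `𝓛` of all links of the hypergraph with edge set `E`:
the maximum number of edges of a graph on `m` vertices containing no copy of any link. -/
noncomputable def exLinks (m : ℕ) {V : Type*} [DecidableEq V] (E : Set (Finset V)) : ℕ :=
  sSup {c | ∃ G : SimpleGraph (Fin m),
    (∀ w : V, ¬ ContainsCopy G (link E w)) ∧ c = G.edgeSet.ncard}

/-- `ex(m, H)` for a 3-uniform hypergraph `H` with edge set `E`: the maximum number of
edges of a 3-uniform hypergraph on `m` vertices containing no copy of `H`. -/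
noncomputable def ex3 (m : ℕ) {V : Type*} (E : Set (Finset V)) : ℕ :=
  sSup {c | ∃ T : Set (Finset (Fin m)),
    (∀ e ∈ T, e.card = 3) ∧ ¬ Contains3 T E ∧ c = T.ncard}

-- equiv
def eOpt (s : ℕ) : {z : Option (Fin s × Fin 5) // z ≠ none} ≃ Fin (5 * s) :=
  ((Equiv.subtypeEquivRight (fun z => (Option.isSome_iff_ne_none).symm)).trans
    (Equiv.optionIsSomeEquiv _)).trans (finProdFinEquiv.trans (finCongr (by ring)))

lemma bot_avoids (s : ℕ) (i₁ : Fin s) (u v : Fin 5) (huv : u ≠ v) (m : ℕ) :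
    ∀ w, ¬ ContainsCopy (⊥ : SimpleGraph (Fin m)) (link (HEdges s i₁ u v) w) := by
  rintro w ⟨f, hinj, hmap⟩
  match w with
  | none =>
    have hadj : (link (HEdges s i₁ u v) none).Adj
        ⟨some (i₁, u), by simp⟩ ⟨some (i₁, v), by simp⟩ := by
      rw [link, SimpleGraph.fromRel_adj]
      refine ⟨by simp [huv], Or.inl ?_⟩
      exact Or.inr rfl
    exact hmap _ _ hadj
  | some (i, j) =>
    obtain ⟨j₁, hj₁, j₂, hj₂, hne⟩ :=
      Finset.one_lt_card.mp (by simp [Finset.card_erase_of_mem] :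
        1 < ((Finset.univ : Finset (Fin 5)).erase j).card)
    have hj₁j : j₁ ≠ j := Finset.ne_of_mem_erase hj₁
    have hj₂j : j₂ ≠ j := Finset.ne_of_mem_erase hj₂
    have hadj : (link (HEdges s i₁ u v) (some (i, j))).Adj
        ⟨some (i, j₁), by simp [hj₁j]⟩ ⟨some (i, j₂), by simp [hj₂j]⟩ := by
      rw [link, SimpleGraph.fromRel_adj]
      refine ⟨by simp [hne], Or.inl (Or.inl ⟨?_, i, ?_⟩)⟩
      · rw [Finset.card_insert_of_notMem (by simp [hj₁j.symm, hj₂j.symm]),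
          Finset.card_insert_of_notMem (by simp [hne]), Finset.card_singleton]
      · intro w hw
        simp only [Finset.mem_insert, Finset.mem_singleton] at hw
        rcases hw with h | h | h <;> exact ⟨_, h⟩
    exact hmap _ _ hadj

lemma edge_none_cases {s : ℕ} {i₁ : Fin s} {u v : Fin 5} {a b : Option (Fin s × Fin 5)}
    (ha : a ≠ none) (hb : b ≠ none) (hab : a ≠ b)
    (hmem : ({none, a, b} : Finset (Option (Fin s × Fin 5))) ∈ HEdges s i₁ u v) :
    (a = some (i₁, u) ∧ b = some (i₁, v)) ∨ (a = some (i₁, v) ∧ b = some (i₁, u)) := by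
  rcases hmem with ⟨_, i, hall⟩ | heq
  · obtain ⟨j, hj⟩ := hall none (Finset.mem_insert_self _ _)
    exact absurd hj (by simp)
  · have haM : a ∈ ({none, some (i₁, u), some (i₁, v)} : Finset _) := by
      rw [← heq]; simp
    have hbM : b ∈ ({none, some (i₁, u), some (i₁, v)} : Finset _) := by
      rw [← heq]; simp
    simp only [Finset.mem_insert, Finset.mem_singleton] at haM hbM
    rcases haM with h | h | h <;> rcases hbM with h' | h' | h' <;>
      first
      | exact absurd h ha
      | exact absurd h' hb
      | exact absurd (h.trans h'.symm) hab
      | exact Or.inl ⟨h, h'⟩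
      | exact Or.inr ⟨h, h'⟩

lemma exLinks_zero (s : ℕ) (hs : 1 ≤ s) (i₁ : Fin s) (u v : Fin 5) (huv : u ≠ v) :
    exLinks (5 * s) (HEdges s i₁ u v) = 0 := by
  have hset : {c | ∃ G : SimpleGraph (Fin (5 * s)),
      (∀ w, ¬ ContainsCopy G (link (HEdges s i₁ u v) w)) ∧ c = G.edgeSet.ncard} = {0} := by
    apply Set.eq_singleton_iff_unique_mem.mpr
    constructor
    · exact ⟨⊥, bot_avoids s i₁ u v huv _, by simp⟩
    · rintro c ⟨G, havoid, rfl⟩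
      by_contra hc
      have hfin : G.edgeSet.Finite := Set.toFinite _
      have hne : G.edgeSet.Nonempty := Set.nonempty_of_ncard_ne_zero hc
      obtain ⟨e, he⟩ := hne
      obtain ⟨a, b, hab⟩ : ∃ a b, G.Adj a b := by
        revert he
        exact e.ind (fun a b h => ⟨a, b, h⟩)
      have haneb : a ≠ b := hab.ne
      -- build copy of link none into G
      set zu : {z : Option (Fin s × Fin 5) // z ≠ none} := ⟨some (i₁, u), by simp⟩
      set zv : {z : Option (Fin s × Fin 5) // z ≠ none} := ⟨some (i₁, v), by simp⟩
      have hzuv : eOpt s zu ≠ eOpt s zv := by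
        simp only [ne_eq, EmbeddingLike.apply_eq_iff_eq]
        simp [zu, zv, Subtype.ext_iff, huv]
      set σ₁ := Equiv.swap (eOpt s zu) a
      set c0 := σ₁ (eOpt s zv)
      have hc0a : c0 ≠ a := by
        have : σ₁ (eOpt s zu) = a := Equiv.swap_apply_left _ _
        rw [← this]
        exact fun h => hzuv.symm (σ₁.injective h)
      set σ₂ := Equiv.swap c0 b
      set f : {z : Option (Fin s × Fin 5) // z ≠ none} → Fin (5 * s) :=
        fun z => σ₂ (σ₁ (eOpt s z))
      have hfu : f zu = a := by
        show σ₂ (σ₁ (eOpt s zu)) = a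
        rw [Equiv.swap_apply_left]
        exact Equiv.swap_apply_of_ne_of_ne hc0a.symm haneb
      have hfv : f zv = b := by
        show σ₂ c0 = b
        exact Equiv.swap_apply_left _ _
      apply havoid none
      refine ⟨f, ?_, ?_⟩
      · exact fun x y h => (eOpt s).injective (σ₁.injective (σ₂.injective h))
      · intro x y hxy
        rw [link, SimpleGraph.fromRel_adj] at hxy
        obtain ⟨hne', hmem⟩ := hxy
        have hxv : x.1 ≠ y.1 := fun h => hne' (Subtype.ext h)
        have key : (x = zu ∧ y = zv) ∨ (x = zv ∧ y = zu) := by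
          rcases hmem with h | h
          · rcases edge_none_cases x.2 y.2 hxv h with ⟨h1, h2⟩ | ⟨h1, h2⟩
            · exact Or.inl ⟨Subtype.ext h1, Subtype.ext h2⟩
            · exact Or.inr ⟨Subtype.ext h1, Subtype.ext h2⟩
          · rcases edge_none_cases y.2 x.2 (Ne.symm hxv) h with ⟨h1, h2⟩ | ⟨h1, h2⟩
            · exact Or.inr ⟨Subtype.ext h2, Subtype.ext h1⟩
            · exact Or.inl ⟨Subtype.ext h2, Subtype.ext h1⟩
        rcases key with ⟨hx, hy⟩ | ⟨hx, hy⟩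
        · rw [hx, hy, hfu, hfv]; exact hab
        · rw [hx, hy, hfu, hfv]; exact hab.symm
  rw [exLinks, hset, csSup_singleton]

def q0 (s : ℕ) : Fin (1 + 5 * s) := ⟨0, by omega⟩
def q1 (s : ℕ) : Fin (1 + 5 * s) := ⟨5 * s, by omega⟩

def SS (s : ℕ) : Finset (Fin (1 + 5 * s)) := Finset.univ \ {q0 s, q1 s}

def colf (s : ℕ) (x : Fin (1 + 5 * s)) : ℕ := x.1 % 3

def PP (s : ℕ) : Finset (Finset (Fin (1 + 5 * s))) :=
  ((SS s).powersetCard 2).filter (fun e => ∃ a ∈ e, ∃ b ∈ e, colf s a ≠ colf s b)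

def TT (s : ℕ) : Finset (Finset (Fin (1 + 5 * s))) :=
  (SS s).powersetCard 3 ∪ (PP s).image (insert (q0 s)) ∪ (PP s).image (insert (q1 s))

lemma q0_ne_q1 (s : ℕ) (hs : 1 ≤ s) : q0 s ≠ q1 s := by
  simp [q0, q1, Fin.ext_iff]; omega

lemma SS_card (s : ℕ) (hs : 1 ≤ s) : (SS s).card = 5 * s - 1 := by
  rw [SS, Finset.card_sdiff_of_subset (by simp)]
  rw [Finset.card_insert_of_notMem (by simp [q0_ne_q1 s hs]), Finset.card_singleton]
  simp; omega

lemma mem_SS {s : ℕ} {x : Fin (1 + 5 * s)} : x ∈ SS s ↔ x ≠ q0 s ∧ x ≠ q1 s := by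
  simp [SS]

-- class size bound
lemma class_bound (s : ℕ) (hs : 1 ≤ s) (r : ℕ) :
    3 * ((SS s).filter (fun x => colf s x = r)).card ≤ 5 * s + 1 := by
  have hcard : ((SS s).filter (fun x => colf s x = r)).card ≤ (5 * s - 2) / 3 + 1 := by
    have := Finset.card_le_card_of_injOn (fun x => (x.1 - 1) / 3)
      (s := (SS s).filter (fun x => colf s x = r)) (t := Finset.range ((5 * s - 2) / 3 + 1))
      ?_ ?_
    · simpa using this
    · intro x hx
      simp only [Finset.mem_coe, Finset.coe_filter, Set.mem_setOf_eq, Finset.mem_filter, mem_SS] at hx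
      obtain ⟨⟨hx0, hx1⟩, _⟩ := hx
      have h0 : x.1 ≠ 0 := fun h => hx0 (by simp [q0, Fin.ext_iff, h])
      have h1 : x.1 ≠ 5 * s := fun h => hx1 (by simp [q1, Fin.ext_iff, h])
      have := x.2
      simp only [Finset.mem_coe, Finset.mem_range]
      omega
    · intro x hx y hy hxy
      simp only [Finset.mem_coe, Finset.mem_filter, mem_SS] at hx hy
      simp only [colf] at hx hy
      obtain ⟨⟨hx0, _⟩, hxr⟩ := hx
      obtain ⟨⟨hy0, _⟩, hyr⟩ := hy
      have h0x : x.1 ≠ 0 := fun h => hx0 (by simp [q0, Fin.ext_iff, h])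
      have h0y : y.1 ≠ 0 := fun h => hy0 (by simp [q0, Fin.ext_iff, h])
      have hxy' : (x.1 - 1) / 3 = (y.1 - 1) / 3 := hxy
      have : x.1 = y.1 := by omega
      exact Fin.ext this
  omega

lemma two_mul_choose_two_s13 (c : ℕ) : 2 * c.choose 2 + c = c * c := by
  induction c with
  | zero => rfl
  | succ k ih =>
    rw [Nat.choose_succ_succ, Nat.mul_add, Nat.choose_one_right]
    nlinarith [ih]

lemma classes_sum (s : ℕ) :
    ((SS s).filter (fun x => colf s x = 0)).card + ((SS s).filter (fun x => colf s x = 1)).card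
      + ((SS s).filter (fun x => colf s x = 2)).card = (SS s).card := by
  have hdisj01 : Disjoint ((SS s).filter (fun x => colf s x = 0))
      ((SS s).filter (fun x => colf s x = 1)) := by
    rw [Finset.disjoint_left]; intro a ha hb
    simp only [Finset.mem_filter] at ha hb; omega
  have hdisj2 : Disjoint ((SS s).filter (fun x => colf s x = 0)
      ∪ (SS s).filter (fun x => colf s x = 1)) ((SS s).filter (fun x => colf s x = 2)) := by
    rw [Finset.disjoint_left]; intro a ha hb
    simp only [Finset.mem_union, Finset.mem_filter] at ha hb
    rcases ha with h | h <;> omega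
  rw [← Finset.card_union_of_disjoint hdisj01, ← Finset.card_union_of_disjoint hdisj2]
  congr 1
  ext x
  simp only [Finset.mem_union, Finset.mem_filter]
  constructor
  · rintro ((⟨h, _⟩ | ⟨h, _⟩) | ⟨h, _⟩) <;> exact h
  · intro h
    have : colf s x < 3 := Nat.mod_lt _ (by norm_num)
    rcases (by omega : colf s x = 0 ∨ colf s x = 1 ∨ colf s x = 2) with h' | h' | h'
    · exact Or.inl (Or.inl ⟨h, h'⟩)
    · exact Or.inl (Or.inr ⟨h, h'⟩)
    · exact Or.inr ⟨h, h'⟩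

lemma PP_lower (s : ℕ) (hs : 1 ≤ s) :
    2 * ((5 * s - 1) * (5 * s - 2)) ≤ 3 * (2 * (PP s).card) := by
  have hcover : (SS s).powersetCard 2 ⊆ PP s
      ∪ ((SS s).filter (fun x => colf s x = 0)).powersetCard 2
      ∪ ((SS s).filter (fun x => colf s x = 1)).powersetCard 2
      ∪ ((SS s).filter (fun x => colf s x = 2)).powersetCard 2 := by
    intro e he
    by_cases hmono : ∃ a ∈ e, ∃ b ∈ e, colf s a ≠ colf s b
    · simp only [Finset.mem_union]
      exact Or.inl (Or.inl (Or.inl (Finset.mem_filter.mpr ⟨he, hmono⟩)))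
    · push_neg at hmono
      obtain ⟨hsub, hcd⟩ := Finset.mem_powersetCard.mp he
      obtain ⟨a₀, ha₀⟩ := Finset.card_pos.mp (by omega : 0 < e.card)
      have hr : colf s a₀ < 3 := Nat.mod_lt _ (by norm_num)
      have hsub' : ∀ r, colf s a₀ = r →
          e ∈ ((SS s).filter (fun x => colf s x = r)).powersetCard 2 := by
        intro r hr'
        refine Finset.mem_powersetCard.mpr ⟨?_, hcd⟩
        intro x hx
        exact Finset.mem_filter.mpr ⟨hsub hx, by rw [← hmono a₀ ha₀ x hx, hr']⟩
      interval_cases h : (colf s a₀) <;> simp only [Finset.mem_union]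
      · exact Or.inl (Or.inl (Or.inr (hsub' 0 rfl)))
      · exact Or.inl (Or.inr (hsub' 1 rfl))
      · exact Or.inr (hsub' 2 rfl)
  obtain ⟨t, ht⟩ : ∃ t, 5 * s = t + 2 := ⟨5 * s - 2, by omega⟩
  have hcount : (t + 1).choose 2 ≤ (PP s).card
      + (((SS s).filter (fun x => colf s x = 0)).card.choose 2
        + ((SS s).filter (fun x => colf s x = 1)).card.choose 2
        + ((SS s).filter (fun x => colf s x = 2)).card.choose 2) := by
    have h1 := Finset.card_le_card hcover
    rw [Finset.card_powersetCard, SS_card s hs] at h1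
    rw [show 5 * s - 1 = t + 1 by omega] at h1
    refine le_trans h1 ?_
    refine le_trans (Finset.card_union_le _ _) ?_
    refine le_trans (add_le_add_left (Finset.card_union_le _ _) _) ?_
    refine le_trans (add_le_add_left (add_le_add_left (Finset.card_union_le _ _) _) _) ?_
    simp only [Finset.card_powersetCard]
    omega
  have hsum : ((SS s).filter (fun x => colf s x = 0)).card
      + ((SS s).filter (fun x => colf s x = 1)).card
      + ((SS s).filter (fun x => colf s x = 2)).card = t + 1 := by
    rw [classes_sum s, SS_card s hs]; omega
  have hb0 : 3 * ((SS s).filter (fun x => colf s x = 0)).card ≤ t + 3 := by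
    have := class_bound s hs 0; omega
  have hb1 : 3 * ((SS s).filter (fun x => colf s x = 1)).card ≤ t + 3 := by
    have := class_bound s hs 1; omega
  have hb2 : 3 * ((SS s).filter (fun x => colf s x = 2)).card ≤ t + 3 := by
    have := class_bound s hs 2; omega
  rw [show 5 * s - 1 = t + 1 by omega, show 5 * s - 2 = t by omega]
  -- abbreviate
  generalize hc0 : ((SS s).filter (fun x => colf s x = 0)).card = c0 at *
  generalize hc1 : ((SS s).filter (fun x => colf s x = 1)).card = c1 at *
  generalize hc2 : ((SS s).filter (fun x => colf s x = 2)).card = c2 at *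
  generalize hP : (PP s).card = P at *
  have e0 := two_mul_choose_two_s13 c0
  have e1 := two_mul_choose_two_s13 c1
  have e2 := two_mul_choose_two_s13 c2
  have eM := two_mul_choose_two_s13 (t + 1)
  have w0 : 3 * (c0 * c0) ≤ (t + 3) * c0 := by
    calc 3 * (c0 * c0) = (3 * c0) * c0 := by ring
    _ ≤ (t + 3) * c0 := Nat.mul_le_mul_right c0 (by omega)
  have w1 : 3 * (c1 * c1) ≤ (t + 3) * c1 := by
    calc 3 * (c1 * c1) = (3 * c1) * c1 := by ring
    _ ≤ (t + 3) * c1 := Nat.mul_le_mul_right c1 (by omega)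
  have w2 : 3 * (c2 * c2) ≤ (t + 3) * c2 := by
    calc 3 * (c2 * c2) = (3 * c2) * c2 := by ring
    _ ≤ (t + 3) * c2 := Nat.mul_le_mul_right c2 (by omega)
  have edist : (t + 3) * c0 + (t + 3) * c1 + (t + 3) * c2 = (t + 3) * (t + 1) := by
    rw [← Nat.mul_add, ← Nat.mul_add, hsum]
  have esq : (t + 3) * (t + 1) = (t + 1) * (t + 1) + 2 * (t + 1) := by ring
  have esq2 : (t + 1) * (t + 1) = (t + 1) * t + (t + 1) := by ring
  linarith

lemma PP_mem {s : ℕ} {e : Finset (Fin (1 + 5 * s))} (he : e ∈ PP s) :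
    e ⊆ SS s ∧ e.card = 2 ∧ ∃ a ∈ e, ∃ b ∈ e, colf s a ≠ colf s b := by
  rw [PP, Finset.mem_filter, Finset.mem_powersetCard] at he
  exact ⟨he.1.1, he.1.2, he.2⟩

lemma q0_not_mem_PP {s : ℕ} {e : Finset (Fin (1 + 5 * s))} (he : e ∈ PP s) : q0 s ∉ e :=
  fun h => ((mem_SS.mp ((PP_mem he).1 h)).1) rfl

lemma q1_not_mem_PP {s : ℕ} {e : Finset (Fin (1 + 5 * s))} (he : e ∈ PP s) : q1 s ∉ e :=
  fun h => ((mem_SS.mp ((PP_mem he).1 h)).2) rfl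

lemma insert_injOn (s : ℕ) (q : Fin (1 + 5 * s)) (hq : ∀ e ∈ PP s, q ∉ e) :
    Set.InjOn (insert q) (↑(PP s) : Set (Finset (Fin (1 + 5 * s)))) := by
  intro e he e' he' h
  have h1 : e = (insert q e).erase q := (Finset.erase_insert (hq e he)).symm
  rw [h1, h, Finset.erase_insert (hq e' he')]

lemma TT_card (s : ℕ) (hs : 1 ≤ s) :
    (TT s).card = (5 * s - 1).choose 3 + ((PP s).card + (PP s).card) := by
  have h0 : ((PP s).image (insert (q0 s))).card = (PP s).card :=
    Finset.card_image_of_injOn (insert_injOn s _ (fun e he => q0_not_mem_PP he))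
  have h1 : ((PP s).image (insert (q1 s))).card = (PP s).card :=
    Finset.card_image_of_injOn (insert_injOn s _ (fun e he => q1_not_mem_PP he))
  have hd1 : Disjoint ((SS s).powersetCard 3 ∪ (PP s).image (insert (q0 s)))
      ((PP s).image (insert (q1 s))) := by
    rw [Finset.disjoint_left]
    intro a ha' hb
    rcases Finset.mem_union.mp ha' with ha | ha
    · obtain ⟨e, he, rfl⟩ := Finset.mem_image.mp hb
      have hsub := (Finset.mem_powersetCard.mp ha).1
      exact (mem_SS.mp (hsub (Finset.mem_insert_self _ _))).2 rfl
    · obtain ⟨e, he, rfl⟩ := Finset.mem_image.mp hb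
      obtain ⟨e', he', heq⟩ := Finset.mem_image.mp ha
      have : q0 s ∈ insert (q1 s) e := by
        rw [← heq]; exact Finset.mem_insert_self _ _
      rcases Finset.mem_insert.mp this with h | h
      · exact (q0_ne_q1 s hs) h
      · exact q0_not_mem_PP he h
  have hd0 : Disjoint ((SS s).powersetCard 3) ((PP s).image (insert (q0 s))) := by
    rw [Finset.disjoint_left]
    intro a ha hb
    obtain ⟨e, he, rfl⟩ := Finset.mem_image.mp hb
    have hsub := (Finset.mem_powersetCard.mp ha).1
    exact (mem_SS.mp (hsub (Finset.mem_insert_self _ _))).1 rfl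
  rw [TT, Finset.card_union_of_disjoint hd1, Finset.card_union_of_disjoint hd0,
    Finset.card_powersetCard, SS_card s hs, h0, h1, Nat.add_assoc]

lemma TT_uniform (s : ℕ) : ∀ e ∈ TT s, e.card = 3 := by
  intro e he
  rw [TT] at he
  rcases Finset.mem_union.mp he with h | h
  · rcases Finset.mem_union.mp h with h | h
    · exact (Finset.mem_powersetCard.mp h).2
    · obtain ⟨e', he', rfl⟩ := Finset.mem_image.mp h
      rw [Finset.card_insert_of_notMem (q0_not_mem_PP he'), (PP_mem he').2.1]
  · obtain ⟨e', he', rfl⟩ := Finset.mem_image.mp h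
    rw [Finset.card_insert_of_notMem (q1_not_mem_PP he'), (PP_mem he').2.1]

lemma triple_mem_TT (s : ℕ) (hs : 1 ≤ s) {q w1 w2 : Fin (1 + 5 * s)}
    (hq : q = q0 s ∨ q = q1 s) (hw1 : w1 ≠ q) (hw2 : w2 ≠ q)
    (hmem : ({q, w1, w2} : Finset (Fin (1 + 5 * s))) ∈ TT s) :
    colf s w1 ≠ colf s w2 := by
  have hqmem : q ∈ ({q, w1, w2} : Finset (Fin (1 + 5 * s))) := Finset.mem_insert_self _ _
  rw [TT] at hmem
  rcases Finset.mem_union.mp hmem with h | h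
  · rcases Finset.mem_union.mp h with h | h
    · -- in powersetCard 3 SS : impossible since q ∈ e ⊆ SS
      have hsub := (Finset.mem_powersetCard.mp h).1
      have := mem_SS.mp (hsub hqmem)
      rcases hq with h' | h'
      · exact absurd h' this.1
      · exact absurd h' this.2
    · -- insert q0 e
      obtain ⟨e, he, heq⟩ := Finset.mem_image.mp h
      rcases hq with h' | h'
      · -- q = q0 : e = {w1, w2}
        have hqe : q ∉ ({w1, w2} : Finset (Fin (1 + 5 * s))) := by
          simp only [Finset.mem_insert, Finset.mem_singleton]
          rintro (h | h)
          · exact hw1 h.symm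
          · exact hw2 h.symm
        have he' : e = {w1, w2} := by
          have : e = (insert (q0 s) e).erase (q0 s) :=
            (Finset.erase_insert (q0_not_mem_PP he)).symm
          rw [this, heq, ← h', show ({q, w1, w2} : Finset (Fin (1 + 5 * s)))
            = insert q {w1, w2} from rfl, Finset.erase_insert hqe]
        obtain ⟨-, -, a, ha, b, hb, hab⟩ := PP_mem he
        rw [he'] at ha hb
        simp only [Finset.mem_insert, Finset.mem_singleton] at ha hb
        rcases ha with rfl | rfl <;> rcases hb with rfl | rfl
        · exact absurd rfl hab
        · exact hab
        · exact hab.symm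
        · exact absurd rfl hab
      · -- q = q1 : impossible since q1 ∈ insert q0 e
        rw [← heq] at hqmem
        rcases Finset.mem_insert.mp hqmem with h'' | h''
        · exact absurd (h''.symm.trans h') (q0_ne_q1 s hs)
        · exact absurd (h' ▸ h'') (q1_not_mem_PP he)
  · -- insert q1 e
    obtain ⟨e, he, heq⟩ := Finset.mem_image.mp h
    rcases hq with h' | h'
    · rw [← heq] at hqmem
      rcases Finset.mem_insert.mp hqmem with h'' | h''
      · exact absurd (h'.symm.trans h'') (q0_ne_q1 s hs)
      · exact absurd (h' ▸ h'') (q0_not_mem_PP he)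
    · have hqe : q ∉ ({w1, w2} : Finset (Fin (1 + 5 * s))) := by
        simp only [Finset.mem_insert, Finset.mem_singleton]
        rintro (h | h)
        · exact hw1 h.symm
        · exact hw2 h.symm
      have he' : e = {w1, w2} := by
        have : e = (insert (q1 s) e).erase (q1 s) :=
          (Finset.erase_insert (q1_not_mem_PP he)).symm
        rw [this, heq, ← h', show ({q, w1, w2} : Finset (Fin (1 + 5 * s)))
          = insert q {w1, w2} from rfl, Finset.erase_insert hqe]
      obtain ⟨-, -, a, ha, b, hb, hab⟩ := PP_mem he
      rw [he'] at ha hb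
      simp only [Finset.mem_insert, Finset.mem_singleton] at ha hb
      rcases ha with rfl | rfl <;> rcases hb with rfl | rfl
      · exact absurd rfl hab
      · exact hab
      · exact hab.symm
      · exact absurd rfl hab

lemma TT_nocopy (s : ℕ) (hs : 1 ≤ s) (i₁ : Fin s) (u v : Fin 5) :
    ¬ Contains3 (↑(TT s) : Set (Finset (Fin (1 + 5 * s)))) (HEdges s i₁ u v) := by
  rintro ⟨f, hinj, hmap⟩
  have hbij : Function.Bijective f := by
    rw [Fintype.bijective_iff_injective_and_card]
    refine ⟨hinj, ?_⟩
    simp [Fintype.card_option]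
    ring
  obtain ⟨z0, hz0⟩ := hbij.2 (q0 s)
  obtain ⟨z1, hz1⟩ := hbij.2 (q1 s)
  have hz01 : z0 ≠ z1 := fun h => (q0_ne_q1 s hs) (by rw [← hz0, ← hz1, h])
  -- at least one of z0 z1 is some
  have key : ∀ (i : Fin s) (j : Fin 5), (f (some (i, j)) = q0 s ∨ f (some (i, j)) = q1 s)
      → False := by
    intro i j hq
    set q := f (some (i, j)) with hqdef
    set w : Fin 4 → Fin (1 + 5 * s) := fun k => f (some (i, j.succAbove k)) with hwdef
    have hcol : ∀ k k' : Fin 4, k ≠ k' → colf s (w k) ≠ colf s (w k') := by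
      intro k k' hkk'
      have hedge : ({some (i, j), some (i, j.succAbove k), some (i, j.succAbove k')} :
          Finset (Option (Fin s × Fin 5))) ∈ HEdges s i₁ u v := by
        have haj : j.succAbove k ≠ j := j.succAbove_ne k
        have hbj : j.succAbove k' ≠ j := j.succAbove_ne k'
        have habd : j.succAbove k ≠ j.succAbove k' :=
          (Fin.succAbove_right_injective (p := j)).ne hkk'
        left
        constructor
        · rw [Finset.card_insert_of_notMem (by simp [Prod.ext_iff, Ne.symm haj, Ne.symm hbj]),
            Finset.card_insert_of_notMem (by simp [Prod.ext_iff, habd]),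
            Finset.card_singleton]
        · exact ⟨i, by intro w hw; simp only [Finset.mem_insert, Finset.mem_singleton] at hw
                       rcases hw with h | h | h <;> exact ⟨_, h⟩⟩
      have himg := hmap _ hedge
      have himg' : ({q, w k, w k'} : Finset (Fin (1 + 5 * s))) ∈ TT s := by
        have : ({some (i, j), some (i, j.succAbove k), some (i, j.succAbove k')} :
            Finset (Option (Fin s × Fin 5))).image f = {q, w k, w k'} := by
          rw [Finset.image_insert, Finset.image_insert, Finset.image_singleton]
        rw [← this]
        exact_mod_cast himg
      refine triple_mem_TT s hs hq ?_ ?_ himg'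
      · exact hinj.ne (by simp [Fin.succAbove_ne j k, Prod.ext_iff])
      · exact hinj.ne (by simp [Fin.succAbove_ne j k', Prod.ext_iff])
    have hlt : ∀ k : Fin 4, colf s (w k) < 3 := fun k => Nat.mod_lt _ (by norm_num)
    have h01 := hcol 0 1 (by decide)
    have h02 := hcol 0 2 (by decide)
    have h03 := hcol 0 3 (by decide)
    have h12 := hcol 1 2 (by decide)
    have h13 := hcol 1 3 (by decide)
    have h23 := hcol 2 3 (by decide)
    have l0 := hlt 0; have l1 := hlt 1; have l2 := hlt 2; have l3 := hlt 3
    omega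
  match z0, hz0, z1, hz1, hz01 with
  | some (i, j), hz0, _, _, _ => exact key i j (Or.inl hz0)
  | none, _, some (i, j), hz1, _ => exact key i j (Or.inr hz1)
  | none, _, none, _, hz01 => exact hz01 rfl


theorem hypergraph_counterexample :
    ∃ s₀ : ℕ, ∀ s : ℕ, s₀ ≤ s → ∀ n : ℕ, n = 1 + 5 * s →
      ∀ (i₁ : Fin s) (u v : Fin 5), u ≠ v →
        exLinks (n - 1) (HEdges s i₁ u v) = 0 ∧
        ((n - 2).choose 3 : ℝ) + 4 / 3 * (n - 2).choose 2 =
          ((n - 1).choose 3 : ℝ) + 1 / 3 * (n - 2).choose 2 ∧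
        ((n - 2).choose 3 : ℝ) + 4 / 3 * (n - 2).choose 2 ≤
          (ex3 n (HEdges s i₁ u v) : ℝ) ∧
        ((n - 1).choose 3 : ℝ) + (exLinks (n - 1) (HEdges s i₁ u v) : ℝ) <
          (ex3 n (HEdges s i₁ u v) : ℝ) := by
  refine ⟨1, fun s hs n hn i₁ u v huv => ?_⟩
  subst hn
  obtain ⟨k, hk⟩ : ∃ k, 5 * s = k + 2 := ⟨5 * s - 2, by omega⟩
  have hEx0 : exLinks (1 + 5 * s - 1) (HEdges s i₁ u v) = 0 := by
    rw [show 1 + 5 * s - 1 = 5 * s from by omega]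
    exact exLinks_zero s hs i₁ u v huv
  -- ex3 lower bound
  have hmem : (TT s).card ∈ {c | ∃ T : Set (Finset (Fin (1 + 5 * s))),
      (∀ e ∈ T, e.card = 3) ∧ ¬ Contains3 T (HEdges s i₁ u v) ∧ c = T.ncard} :=
    ⟨↑(TT s), by simpa using TT_uniform s, TT_nocopy s hs i₁ u v,
      (Set.ncard_coe_finset _).symm⟩
  have hbdd : BddAbove {c | ∃ T : Set (Finset (Fin (1 + 5 * s))),
      (∀ e ∈ T, e.card = 3) ∧ ¬ Contains3 T (HEdges s i₁ u v) ∧ c = T.ncard} := by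
    refine ⟨Nat.card (Finset (Fin (1 + 5 * s))), ?_⟩
    rintro c ⟨T, -, -, rfl⟩
    have := Set.ncard_le_ncard (Set.subset_univ T) (Set.toFinite _)
    rwa [Set.ncard_univ] at this
  have hle : (TT s).card ≤ ex3 (1 + 5 * s) (HEdges s i₁ u v) := le_csSup hbdd hmem
  have hTTcard : (TT s).card = (k + 1).choose 3 + ((PP s).card + (PP s).card) := by
    rw [TT_card s hs, show 5 * s - 1 = k + 1 from by omega]
  have hP6 : 4 * (k + 1).choose 2 ≤ 6 * (PP s).card := by
    have hPL := PP_lower s hs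
    rw [show 5 * s - 1 = k + 1 from by omega, show 5 * s - 2 = k from by omega] at hPL
    have h2c := two_mul_choose_two_s13 (k + 1)
    have hexp : (k + 1) * (k + 1) = (k + 1) * k + (k + 1) := by ring
    omega
  have hchoose3 : ((1 + 5 * s - 2).choose 3 : ℝ) + 4 / 3 * (1 + 5 * s - 2).choose 2 ≤
      (ex3 (1 + 5 * s) (HEdges s i₁ u v) : ℝ) := by
    rw [show 1 + 5 * s - 2 = k + 1 from by omega]
    have hle' : ((TT s).card : ℝ) ≤ ex3 (1 + 5 * s) (HEdges s i₁ u v) := Nat.cast_le.mpr hle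
    have hP6' : ((4 * (k + 1).choose 2 : ℕ) : ℝ) ≤ ((6 * (PP s).card : ℕ) : ℝ) :=
      Nat.cast_le.mpr hP6
    rw [hTTcard] at hle'
    push_cast at hle' hP6' ⊢
    linarith
  have hpascal : ((1 + 5 * s - 2).choose 3 : ℝ) + 4 / 3 * (1 + 5 * s - 2).choose 2 =
      ((1 + 5 * s - 1).choose 3 : ℝ) + 1 / 3 * (1 + 5 * s - 2).choose 2 := by
    rw [show 1 + 5 * s - 2 = k + 1 from by omega, show 1 + 5 * s - 1 = k + 2 from by omega,
      show k + 2 = (k + 1) + 1 from rfl, Nat.choose_succ_succ (k + 1) 2]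
    push_cast
    ring
  refine ⟨hEx0, hpascal, hchoose3, ?_⟩
  rw [hEx0]
  have hcpos : 0 < ((1 + 5 * s - 2).choose 2 : ℝ) := by
    have : 0 < (1 + 5 * s - 2).choose 2 := Nat.choose_pos (by omega)
    exact_mod_cast this
  push_cast
  linarith [hchoose3, hpascal]
end

section
/- There exists s₀ such that for every integer s ≥ s₀ the following holds. Let n = 1 + 5s, let H be the 3-uniform hypergraph described in the context, and let T be the 3-uniform hypergraph on a vertex set U ∪ {x,y} with |U| = n−2, where U = U_1 ∪ U_2 ∪ U_3 is a partition into three parts of sizes ⌊(n−2)/3⌋ or ⌈(n−2)/3⌉, and whose edges are all 3-element subsets of U together with all triples {x, u_i, u_j} and {y, u_i, u_j} for 1 ≤ i < j ≤ 3, u_i ∈ U_i, u_j ∈ U_j. Then T contains no copy of H. -/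
/-- The edges of the 3-uniform hypergraph `T` on `U ∪ {x, y}`, where `Sum.inl a` are the
vertices of `U` (partitioned into the three parts `U₁, U₂, U₃` by `p`) and
`Sum.inr true = x`, `Sum.inr false = y`: all 3-element subsets of `U`, together with all
triples consisting of `x` or `y` and two vertices of `U` lying in different parts. -/
def TEdges (m : ℕ) (p : Fin m → Fin 3) : Set (Finset (Fin m ⊕ Bool)) :=
  {e | (e.card = 3 ∧ ∀ w ∈ e, ∃ a : Fin m, w = Sum.inl a) ∨
       (∃ z : Bool, ∃ a b : Fin m, p a ≠ p b ∧ e = {Sum.inr z, Sum.inl a, Sum.inl b})}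

theorem T_contains_no_copy_of_H :
    ∃ s₀ : ℕ, ∀ s : ℕ, s₀ ≤ s → ∀ n : ℕ, n = 1 + 5 * s →
      ∀ p : Fin (n - 2) → Fin 3,
        -- the three parts have sizes `⌊(n-2)/3⌋` or `⌈(n-2)/3⌉`:
        (∀ t : Fin 3,
          (n - 2) / 3 ≤ (Finset.univ.filter (fun a => p a = t)).card ∧
          (Finset.univ.filter (fun a => p a = t)).card ≤ (n - 2 + 2) / 3) →
        ∀ (i₁ : Fin s) (u v : Fin 5), u ≠ v →
          ¬ Contains3 (TEdges (n - 2) p) (HEdges s i₁ u v) := by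
  refine ⟨1, fun s hs n hn p _ i₁ u v huv ⟨f, hinj, hmap⟩ => ?_⟩
  -- Step 1: some vertex of some `Vᵢ` maps to `Sum.inr z`.
  have hm : n - 2 = 5 * s - 1 := by omega
  have step1 : ∃ (w : Fin s × Fin 5) (z : Bool), f (some w) = Sum.inr z := by
    by_contra hcon
    push_neg at hcon
    have hall : ∀ w : Fin s × Fin 5, ∃ a : Fin (n - 2), f (some w) = Sum.inl a := by
      intro w
      cases hfw : f (some w) with
      | inl a => exact ⟨a, rfl⟩
      | inr z => exact absurd hfw (hcon w z)
    choose g hg using hall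
    have hgin : Function.Injective g := by
      intro w₁ w₂ h
      have : f (some w₁) = f (some w₂) := by rw [hg, hg, h]
      exact Option.some_injective _ (hinj this)
    have := Fintype.card_le_of_injective g hgin
    simp [Fintype.card_fin] at this
    omega
  obtain ⟨⟨i, j⟩, z, hz⟩ := step1
  -- Key lemma: for distinct `j' j'' ≠ j`, the images land in `Sum.inl` with
  -- distinct values of `p`.
  have key : ∀ j' j'' : Fin 5, j' ≠ j → j'' ≠ j → j' ≠ j'' →
      ∃ a b : Fin (n - 2), f (some (i, j')) = Sum.inl a ∧
        f (some (i, j'')) = Sum.inl b ∧ p a ≠ p b := by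
    intro j' j'' hj' hj'' hjj
    set e : Finset (Option (Fin s × Fin 5)) :=
      {some (i, j), some (i, j'), some (i, j'')} with he
    have heH : e ∈ HEdges s i₁ u v := by
      left
      constructor
      · refine Finset.card_eq_three.mpr ⟨_, _, _, ?_, ?_, ?_, rfl⟩ <;>
          simp [hj'.symm, hj''.symm, hjj]
      · exact ⟨i, by intro w hw; simp [he] at hw; rcases hw with h | h | h <;>
          exact ⟨_, h⟩⟩
    have himg := hmap e heH
    have hmem_j : Sum.inr z ∈ e.image f := by
      rw [← hz]; exact Finset.mem_image_of_mem f (by simp [he])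
    have hmem_j' : f (some (i, j')) ∈ e.image f :=
      Finset.mem_image_of_mem f (by simp [he])
    have hmem_j'' : f (some (i, j'')) ∈ e.image f :=
      Finset.mem_image_of_mem f (by simp [he])
    rcases himg with ⟨_, hallinl⟩ | ⟨z', a, b, hab, heq⟩
    · obtain ⟨a, ha⟩ := hallinl _ hmem_j
      exact absurd ha (by simp)
    · rw [heq] at hmem_j hmem_j' hmem_j''
      simp only [Finset.mem_insert, Finset.mem_singleton] at hmem_j hmem_j' hmem_j''
      have hzz' : z = z' := by
        rcases hmem_j with h | h | h
        · exact Sum.inr.inj h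
        · exact absurd h (by simp)
        · exact absurd h (by simp)
      have hne' : f (some (i, j')) ≠ Sum.inr z' := by
        intro h
        apply hj'
        have : f (some (i, j')) = f (some (i, j)) := by rw [h, hz, hzz']
        have := hinj this
        simpa [Prod.ext_iff] using Option.some_injective _ this
      have hne'' : f (some (i, j'')) ≠ Sum.inr z' := by
        intro h
        apply hj''
        have : f (some (i, j'')) = f (some (i, j)) := by rw [h, hz, hzz']
        have := hinj this
        simpa [Prod.ext_iff] using Option.some_injective _ this
      have hdist : f (some (i, j')) ≠ f (some (i, j'')) := by
        intro h
        exact hjj (by simpa [Prod.ext_iff] using Option.some_injective _ (hinj h))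
      rcases hmem_j' with h' | h' | h'
      · exact absurd h' hne'
      · rcases hmem_j'' with h'' | h'' | h''
        · exact absurd h'' hne''
        · exact absurd (h'.trans h''.symm) hdist
        · exact ⟨a, b, h', h'', hab⟩
      · rcases hmem_j'' with h'' | h'' | h''
        · exact absurd h'' hne''
        · exact ⟨b, a, h', h'', hab.symm⟩
        · exact absurd (h'.trans h''.symm) hdist
  -- Extract, for each `j' ≠ j`, the `Sum.inl` value.
  have hnpos : 0 < n - 2 := by omega
  have hex : ∀ j' : Fin 5, j' ≠ j → ∃ a : Fin (n - 2), f (some (i, j')) = Sum.inl a := by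
    intro j' hj'
    -- find some third index distinct from both j and j'
    have : ∃ j'' : Fin 5, j'' ≠ j ∧ j'' ≠ j' := by
      have hcard : ({j, j'} : Finset (Fin 5)).card ≤ 2 :=
        (Finset.card_insert_le _ _).trans (by simp)
      have hne : (Finset.univ \ ({j, j'} : Finset (Fin 5))).Nonempty := by
        rw [← Finset.card_pos, Finset.card_sdiff_of_subset (Finset.subset_univ _)]
        simp only [Finset.card_univ, Fintype.card_fin]
        omega
      obtain ⟨j'', hj''⟩ := hne
      simp only [Finset.mem_sdiff, Finset.mem_insert, Finset.mem_singleton] at hj''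
      exact ⟨j'', fun h => hj''.2 (Or.inl h), fun h => hj''.2 (Or.inr h)⟩
    obtain ⟨j'', hj''j, hj''j'⟩ := this
    obtain ⟨a, b, ha, hb, hpab⟩ := key j' j'' hj' hj''j (Ne.symm hj''j')
    exact ⟨a, ha⟩
  -- Define the part-index function on `Fin 5 \ {j}` and derive pigeonhole contradiction.
  classical
  set A : Fin 5 → Fin (n - 2) := fun j' =>
    if h : ∃ a : Fin (n - 2), f (some (i, j')) = Sum.inl a then h.choose
    else ⟨0, hnpos⟩ with hA
  have hAspec : ∀ j' : Fin 5, j' ≠ j → f (some (i, j')) = Sum.inl (A j') := by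
    intro j' hj'
    have h := hex j' hj'
    simp only [hA, dif_pos h]
    exact h.choose_spec
  have hinjOn : Set.InjOn (fun j' => p (A j')) ((Finset.univ.erase j) : Finset (Fin 5)) := by
    intro j' hj' j'' hj'' hpe
    by_contra hne
    simp only [Finset.coe_erase, Set.mem_diff, Set.mem_singleton_iff] at hj' hj''
    obtain ⟨a, b, ha, hb, hpab⟩ := key j' j'' hj'.2 hj''.2 hne
    have ha' : a = A j' := (Sum.inl.inj ((hAspec j' hj'.2).symm.trans ha)).symm
    have hb' : b = A j'' := (Sum.inl.inj ((hAspec j'' hj''.2).symm.trans hb)).symm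
    rw [ha', hb'] at hpab
    exact hpab hpe
  have h4 : (Finset.univ.erase j).card = 4 := by
    rw [Finset.card_erase_of_mem (Finset.mem_univ j)]
    simp
  have hle : (Finset.univ.erase j).card ≤ (Finset.univ : Finset (Fin 3)).card :=
    Finset.card_le_card_of_injOn (fun j' => p (A j')) (fun _ _ => Finset.mem_univ _) hinjOn
  rw [h4] at hle
  simp at hle
end
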